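/- arXiv:1105.1764 — 5 statements merged into one kernel-verified Lean document; each statement's English description precedes it below -/
import Mathlib

section
/- If H is a 1-extendable finite simple graph with at least two perfect matchings, then H is 2-connected (H has at least three vertices and there is no vertex x such that H − x is disconnected). -/
open SimpleGraph

variable {V : Type}

/-- The number of perfect matchings of a simple graph. -/
noncomputable def numPM (G : SimpleGraph V) : ℕ :=
  Nat.card {M : G.Subgraph // M.IsPerfectMatching}

/-- An edge, given by its two endpoints, is extendable if it lies in some perfect matching. -/
def IsExtendableEdge (G : SimpleGraph V) (u v : V) : Prop :=
  ∃ M : G.Subgraph, M.IsPerfectMatching ∧ M.Adj u v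

/-- A connected graph is 1-extendable if it has a perfect matching and every edge is
extendable. -/
def OneExtendable (G : SimpleGraph V) : Prop :=
  G.Connected ∧ (∃ M : G.Subgraph, M.IsPerfectMatching) ∧
    ∀ ⦃u v : V⦄, G.Adj u v → IsExtendableEdge G u v

/-- The number of connected components of `G - S` with an odd number of vertices. -/
noncomputable def oddComponentCount (G : SimpleGraph V) (S : Set V) : ℕ :=
  Nat.card {c : (G.induce (Sᶜ : Set V)).ConnectedComponent // Odd (Nat.card c.supp)}

/-- `S` is a barrier of `G` if the number of odd components of `G - S` equals `|S|`. -/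
def IsBarrier (G : SimpleGraph V) (S : Set V) : Prop :=
  oddComponentCount G S = S.ncard

/-- A maximal barrier is a barrier not properly contained in any other barrier. -/
def IsMaximalBarrier (G : SimpleGraph V) (S : Set V) : Prop :=
  IsBarrier G S ∧ ∀ T : Set V, IsBarrier G T → S ⊆ T → T = S

/-- `ℰ(H)`: the supergraphs of `H` on the same vertex set with the same number of
perfect matchings. -/
def elemSupergraphs (H : SimpleGraph V) : Set (SimpleGraph V) :=
  {G | H ≤ G ∧ numPM G = numPM H}

/-- The excess of a graph: `e(G) - n(G)^2/4`. -/
noncomputable def excess (G : SimpleGraph V) : ℚ :=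
  (G.edgeSet.ncard : ℚ) - (Nat.card V : ℚ) ^ 2 / 4

/-- The spanning subgraph of `G` consisting of the free (non-extendable) edges. -/
def freeSubgraph (G : SimpleGraph V) : SimpleGraph V where
  Adj u v := G.Adj u v ∧ ¬ IsExtendableEdge G u v
  symm := by
    constructor
    intro u v h
    refine ⟨h.1.symm, fun hc => h.2 ?_⟩
    obtain ⟨M, hM, hadj⟩ := hc
    exact ⟨M, hM, hadj.symm⟩
  loopless := ⟨fun v h => G.loopless.irrefl v h.1⟩

/-- The graph obtained from `H` by simultaneously augmenting `m` ears; the `j`-th ear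
joins `x j` to `y j` and has `ℓ j` internal vertices (its order). -/
def earsAugment (H : SimpleGraph V) (m : ℕ) (x y : Fin m → V) (ℓ : Fin m → ℕ) :
    SimpleGraph (V ⊕ (Σ j : Fin m, Fin (ℓ j))) :=
  SimpleGraph.fromRel fun a b =>
    match a, b with
    | Sum.inl u, Sum.inl v => H.Adj u v ∨ ∃ j, ℓ j = 0 ∧ u = x j ∧ v = y j
    | Sum.inl u, Sum.inr ⟨j, i⟩ => u = x j ∧ (i : ℕ) = 0
    | Sum.inr ⟨j, i⟩, Sum.inl u => u = y j ∧ (i : ℕ) + 1 = ℓ j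
    | Sum.inr ⟨j, i⟩, Sum.inr ⟨j', i'⟩ => j = j' ∧ (i : ℕ) + 1 = (i' : ℕ)

/-- Validity conditions for a system of (even-order) ears attached to `H`:
distinct endpoints, even orders, trivial ears are new edges, and distinct trivial ears
are distinct edges. -/
def IsEarSystem (H : SimpleGraph V) (m : ℕ) (x y : Fin m → V) (ℓ : Fin m → ℕ) : Prop :=
  (∀ j, x j ≠ y j) ∧ (∀ j, Even (ℓ j)) ∧
  (∀ j, ℓ j = 0 → ¬ H.Adj (x j) (y j)) ∧
  (∀ j j', j ≠ j' → ℓ j = 0 → ℓ j' = 0 → s(x j, y j) ≠ s(x j', y j'))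

/-- A single-ear augmentation of `H` by an ear from `a` to `b` with `l` internal
vertices. -/
def singleEar (H : SimpleGraph V) (a b : V) (l : ℕ) :
    SimpleGraph (V ⊕ (Σ _ : Fin 1, Fin l)) :=
  earsAugment H 1 (fun _ => a) (fun _ => b) (fun _ => l)

/-- `B` meets more than one connected component of `H - S`. -/
def MeetsMultipleComponents (H : SimpleGraph V) (S B : Set V) : Prop :=
  ∃ c₁ c₂ : (H.induce (Sᶜ : Set V)).ConnectedComponent, c₁ ≠ c₂ ∧
    (∃ v ∈ c₁.supp, (v : V) ∈ B) ∧ (∃ v ∈ c₂.supp, (v : V) ∈ B)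

/-- Two barriers conflict if they intersect, or one meets more than one component of the
graph minus the other. -/
def BarriersConflict (H : SimpleGraph V) (B₁ B₂ : Set V) : Prop :=
  (B₁ ∩ B₂).Nonempty ∨ MeetsMultipleComponents H B₂ B₁ ∨ MeetsMultipleComponents H B₁ B₂

/-- A cover set of `H`: a partition of `V(H)` into pairwise non-conflicting nonempty
barriers. -/
def IsCoverSet (H : SimpleGraph V) (I : Set (Set V)) : Prop :=
  (∀ B ∈ I, B.Nonempty ∧ IsBarrier H B) ∧
  (∀ B₁ ∈ I, ∀ B₂ ∈ I, B₁ ≠ B₂ → ¬ BarriersConflict H B₁ B₂) ∧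
  ∀ v : V, ∃! B, B ∈ I ∧ v ∈ B

/-- The order `𝓘₁ ⪯ 𝓘₂` on cover sets: every part of `𝓘₁` is contained in a part of
`𝓘₂`. -/
def CoverLE (I₁ I₂ : Set (Set V)) : Prop :=
  ∀ B₁ ∈ I₁, ∃ B₂ ∈ I₂, B₁ ⊆ B₂

/-- The graph `H_𝓘` obtained from `H` by adding all possible edges inside each part of
`𝓘`. -/
def fillGraph (H : SimpleGraph V) (I : Set (Set V)) : SimpleGraph V :=
  H ⊔ SimpleGraph.fromRel fun u v => ∃ B ∈ I, u ∈ B ∧ v ∈ B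

/-- The graph obtained from `H` by adding all possible edges inside the set `X`. -/
def fillSide (H : SimpleGraph V) (X : Set V) : SimpleGraph V :=
  H ⊔ SimpleGraph.fromRel fun u v => u ∈ X ∧ v ∈ X

/-- A (connected, 2-regular) cycle graph. -/
def IsCycleGraph (G : SimpleGraph V) : Prop :=
  G.Connected ∧ ∀ v : V, (G.neighborSet v).ncard = 2

/-- An ear of `H`: a path `f 0, f 1, ..., f k` whose endpoints have degree at least three
and whose internal vertices have degree exactly two. -/
def IsEar (H : SimpleGraph V) (k : ℕ) (f : Fin (k + 1) → V) : Prop :=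
  1 ≤ k ∧ Function.Injective f ∧
  (∀ i : Fin k, H.Adj (f i.castSucc) (f i.succ)) ∧
  3 ≤ (H.neighborSet (f 0)).ncard ∧
  3 ≤ (H.neighborSet (f (Fin.last k))).ncard ∧
  ∀ i : Fin (k + 1), i ≠ 0 → i ≠ Fin.last k → (H.neighborSet (f i)).ncard = 2

/-- The edge `uv` lies on the path `f 0, ..., f k`. -/
def EdgeOnPath (k : ℕ) (f : Fin (k + 1) → V) (u v : V) : Prop :=
  ∃ i : Fin k, (u = f i.castSucc ∧ v = f i.succ) ∨ (v = f i.castSucc ∧ u = f i.succ)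

/-- A graph is almost 1-extendable if it has a perfect matching and all of its free edges
lie on a single ear (the whole graph counting as an ear when it is a cycle). -/
def AlmostOneExtendable (G : SimpleGraph V) : Prop :=
  (∃ M : G.Subgraph, M.IsPerfectMatching) ∧
  (IsCycleGraph G ∨
    ∃ (k : ℕ) (f : Fin (k + 1) → V), IsEar G k f ∧
      ∀ u v : V, G.Adj u v → ¬ IsExtendableEdge G u v → EdgeOnPath k f u v)

/-- A graph with at least three vertices is 2-connected if no single vertex deletion
disconnects it. -/
def TwoConnected (G : SimpleGraph V) : Prop :=
  3 ≤ Nat.card V ∧ ∀ v : V, (G.induce ({v}ᶜ : Set V)).Connected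

/-- Membership in the class `𝓜ᵖ`: 2-connected graphs with between 2 and `p` perfect
matchings which are 1-extendable or almost 1-extendable. -/
def MemM (p : ℕ) (G : SimpleGraph V) : Prop :=
  TwoConnected G ∧ 2 ≤ numPM G ∧ numPM G ≤ p ∧
    (OneExtendable G ∨ AlmostOneExtendable G)

/-- `a` and `b` lie in different connected components of `H - B`. -/
def InDiffComponents (H : SimpleGraph V) (B : Set V) (a b : V) : Prop :=
  ∃ (ha : a ∈ (Bᶜ : Set V)) (hb : b ∈ (Bᶜ : Set V)),
    (H.induce (Bᶜ : Set V)).connectedComponentMk ⟨a, ha⟩ ≠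
      (H.induce (Bᶜ : Set V)).connectedComponentMk ⟨b, hb⟩

/-- The `a`-th vertex `x_a` along the `j`-th ear `x 0 = x_0, x_1, ..., x_{ℓ j}, x_{ℓ j + 1} = y j`. -/
def earVertex {m : ℕ} (x y : Fin m → V) (ℓ : Fin m → ℕ) (j : Fin m) (a : ℕ) :
    V ⊕ (Σ j : Fin m, Fin (ℓ j)) :=
  if h : 0 < a ∧ a ≤ ℓ j then Sum.inr ⟨j, ⟨a - 1, by omega⟩⟩
  else if a = 0 then Sum.inl (x j) else Sum.inl (y j)

/-- Non-refinability of a two-ear augmentation: neither single-ear augmentation is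
1-extendable. -/
def NonRefinableSystem (H : SimpleGraph V) (m : ℕ) (x y : Fin m → V) (ℓ : Fin m → ℕ) :
    Prop :=
  ∀ j : Fin m, m = 2 → ¬ OneExtendable (singleEar H (x j) (y j) (ℓ j))
lemma matching_closed_even {V : Type} [Finite V] {H : SimpleGraph V} {M : H.Subgraph}
    (hM : M.IsPerfectMatching) (s : Set V)
    (hcl : ∀ v ∈ s, ∀ w, M.Adj v w → w ∈ s) : Even s.ncard := by
  classical
  have hmatch : (M.induce s).IsMatching := by
    intro v hv
    simp only [Subgraph.induce_verts] at hv
    obtain ⟨w, hw, huniq⟩ := hM.1 (hM.2 v)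
    exact ⟨w, ⟨hv, hcl v hv w hw, hw⟩, fun y hy => huniq y hy.2.2⟩
  haveI : Fintype ((M.induce s).verts) := Fintype.ofFinite _
  have h := hmatch.even_card
  have he : (M.induce s).verts.toFinset.card = s.ncard := by
    rw [Set.toFinset_card, ← Nat.card_eq_fintype_card, Nat.card_coe_set_eq,
      Subgraph.induce_verts]
  rwa [he] at h

lemma exists_adj_same_component {V : Type} {H : SimpleGraph V} {x : V} :
    ∀ {u t : V} (_ : H.Walk u t) (hu : u ∈ ({x}ᶜ : Set V)),
    (∃ ht : t ∈ ({x}ᶜ : Set V),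
      (H.induce ({x}ᶜ : Set V)).connectedComponentMk ⟨u, hu⟩ =
      (H.induce ({x}ᶜ : Set V)).connectedComponentMk ⟨t, ht⟩) ∨
    ∃ (z : V) (hz : z ∈ ({x}ᶜ : Set V)), H.Adj x z ∧
      (H.induce ({x}ᶜ : Set V)).connectedComponentMk ⟨z, hz⟩ =
      (H.induce ({x}ᶜ : Set V)).connectedComponentMk ⟨u, hu⟩ := by
  intro u t w
  induction w with
  | nil => intro hu; exact Or.inl ⟨hu, rfl⟩
  | @cons u u' t hadj p ih =>
    intro hu
    by_cases hu' : u' ∈ ({x}ᶜ : Set V)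
    · have hcomp : (H.induce ({x}ᶜ : Set V)).connectedComponentMk ⟨u, hu⟩ =
          (H.induce ({x}ᶜ : Set V)).connectedComponentMk ⟨u', hu'⟩ := by
        apply ConnectedComponent.eq.mpr
        apply Adj.reachable
        simpa only [comap_adj, Function.Embedding.coe_subtype] using hadj
      rcases ih hu' with ⟨ht, hc⟩ | ⟨z, hz, hxz, hc⟩
      · exact Or.inl ⟨ht, hcomp.trans hc⟩
      · exact Or.inr ⟨z, hz, hxz, hc.trans hcomp.symm⟩
    · simp only [Set.mem_compl_iff, Set.mem_singleton_iff, not_not] at hu'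
      subst hu'
      exact Or.inr ⟨u, hu, hadj.symm, rfl⟩

/-- A 1-extendable graph with at least two perfect matchings is
2-connected: it has at least three vertices and no vertex deletion disconnects it. -/
theorem oneExtendable_twoConnected [Finite V] (H : SimpleGraph V)
    (h1 : OneExtendable H) (h2 : 2 ≤ numPM H) :
    3 ≤ Nat.card V ∧ ∀ x : V, (H.induce ({x}ᶜ : Set V)).Connected := by
    classical
  obtain ⟨hconn, -, hextE⟩ := h1
  have hext : ∀ ⦃u v : V⦄, H.Adj u v →
      ∃ M : H.Subgraph, M.IsPerfectMatching ∧ M.Adj u v := fun u v h => hextE h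

  haveI : Fintype V := Fintype.ofFinite V
  -- two distinct perfect matchings
  have hfinM : Finite {M : H.Subgraph // M.IsPerfectMatching} :=
    Nat.finite_of_card_ne_zero (by unfold numPM at h2; omega)
  have hnt : Nontrivial {M : H.Subgraph // M.IsPerfectMatching} :=
    Finite.one_lt_card_iff_nontrivial.mp (lt_of_lt_of_le one_lt_two h2)
  obtain ⟨⟨M1, hM1⟩, ⟨M2, hM2⟩, hne⟩ := hnt
  have hMne : M1 ≠ M2 := fun h => hne (Subtype.ext h)
  have hAdjne : ∃ u v, (M1.Adj u v ∧ ¬ M2.Adj u v) ∨ (M2.Adj u v ∧ ¬ M1.Adj u v) := by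
    by_contra hcon
    push_neg at hcon
    apply hMne
    ext u v
    · simp [hM1.2 u, hM2.2 u]
    · exact ⟨fun h => (hcon u v).1 h, fun h => (hcon u v).2 h⟩
  -- three distinct vertices
  have hcard3 : 3 ≤ Nat.card V := by
    obtain ⟨u, v, hcase⟩ := hAdjne
    have key : ∀ (Ma Mb : H.Subgraph), Ma.IsPerfectMatching → Mb.IsPerfectMatching →
        Ma.Adj u v → ¬ Mb.Adj u v → 3 ≤ Nat.card V := by
      intro Ma Mb hMa hMb hav hbv
      obtain ⟨w, hw, -⟩ := hMb.1 (hMb.2 u)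
      have huv : u ≠ v := (Ma.adj_sub hav).ne
      have huw : u ≠ w := (Mb.adj_sub hw).ne
      have hvw : v ≠ w := fun h => hbv (h ▸ hw)
      rw [Nat.card_eq_fintype_card]
      have h3 : ({u, v, w} : Finset V).card = 3 :=
        Finset.card_eq_three.mpr ⟨u, v, w, huv, huw, hvw, rfl⟩
      calc 3 = ({u, v, w} : Finset V).card := h3.symm
        _ ≤ Finset.univ.card := Finset.card_le_univ _
        _ = Fintype.card V := Finset.card_univ
    rcases hcase with ⟨h1, h2'⟩ | ⟨h1, h2'⟩
    · exact key M1 M2 hM1 hM2 h1 h2'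
    · exact key M2 M1 hM2 hM1 h1 h2'
  refine ⟨hcard3, fun x => ?_⟩
  by_contra hdis
  have hne' : Nonempty ({x}ᶜ : Set V) := by
    have : Nontrivial V := Finite.one_lt_card_iff_nontrivial.mp (by omega)
    obtain ⟨y, hy⟩ := exists_ne x
    exact ⟨⟨y, hy⟩⟩
  rw [connected_iff] at hdis
  simp only [hne', and_true] at hdis
  rw [Preconnected] at hdis
  push_neg at hdis
  obtain ⟨a, b, hab⟩ := hdis
  have hcacb : (H.induce ({x}ᶜ : Set V)).connectedComponentMk a ≠
      (H.induce ({x}ᶜ : Set V)).connectedComponentMk b :=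
    fun h => hab (ConnectedComponent.eq.mp h)
  -- M1's partner of x
  obtain ⟨y, hxy, hyuniq⟩ := hM1.1 (hM1.2 x)
  have hy : y ∈ ({x}ᶜ : Set V) := by
    simp only [Set.mem_compl_iff, Set.mem_singleton_iff]
    exact (M1.adj_sub hxy).ne'
  -- pick a vertex whose component avoids y's component
  have hchoice : ∃ u0 : ({x}ᶜ : Set V),
      (H.induce ({x}ᶜ : Set V)).connectedComponentMk u0 ≠
      (H.induce ({x}ᶜ : Set V)).connectedComponentMk ⟨y, hy⟩ := by
    rcases eq_or_ne ((H.induce ({x}ᶜ : Set V)).connectedComponentMk ⟨y, hy⟩)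
        ((H.induce ({x}ᶜ : Set V)).connectedComponentMk a) with h | h
    · exact ⟨b, fun hb => hcacb (h.symm.trans hb.symm)⟩
    · exact ⟨a, fun ha => h (ha.symm)⟩
  obtain ⟨u0, hu0⟩ := hchoice
  -- x has a neighbor z in u0's component
  obtain ⟨p⟩ := hconn.preconnected (↑u0) x
  rcases exists_adj_same_component p u0.2 with ⟨ht, -⟩ | ⟨z, hz, hxz, hzc⟩
  · exact absurd rfl ht
  -- extendable edge xz: matching M' containing it
  obtain ⟨M', hM', hMxz⟩ := hext hxz
  have hxuniq : ∀ w, M'.Adj x w → w = z := by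
    obtain ⟨z', -, hu⟩ := hM'.1 (hM'.2 x)
    intro w hw
    rw [hu w hw, hu z hMxz]
  -- the component's vertex set in V
  set s : Set V := {v : V | ∃ hv : v ∈ ({x}ᶜ : Set V),
    (H.induce ({x}ᶜ : Set V)).connectedComponentMk ⟨v, hv⟩ =
    (H.induce ({x}ᶜ : Set V)).connectedComponentMk u0} with hs_def
  have hcompmem : ∀ (v w : V) (hv : v ∈ ({x}ᶜ : Set V)) (hw : w ∈ ({x}ᶜ : Set V)),
      H.Adj v w → v ∈ s → w ∈ s := by
    intro v w hv hw hadj hvs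
    obtain ⟨hv', hvc⟩ := hvs
    refine ⟨hw, ?_⟩
    rw [← hvc]
    apply ConnectedComponent.eq.mpr
    apply Adj.reachable
    simpa only [comap_adj, Function.Embedding.coe_subtype] using hadj.symm
  have hsx : ∀ v ∈ s, v ≠ x := fun v hv => hv.1
  have hzs : z ∈ s := ⟨hz, hzc⟩
  -- s is even (M1-closed)
  have heven1 : Even s.ncard := by
    apply matching_closed_even hM1 s
    intro v hvs w hvw
    by_cases hwx : w = x
    · exfalso
      subst hwx
      have : v = y := hyuniq v hvw.symm
      subst this
      obtain ⟨hv', hvc⟩ := hvs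
      exact hu0 (hvc.symm.trans (by congr))
    · exact hcompmem v w hvs.1 hwx hvw.adj_sub hvs
  -- s \ {z} is even (M'-closed)
  have heven2 : Even (s \ {z}).ncard := by
    apply matching_closed_even hM' (s \ {z})
    intro v hvs w hvw
    obtain ⟨hvs', hvz⟩ := hvs
    by_cases hwx : w = x
    · exfalso
      subst hwx
      exact hvz (hxuniq v hvw.symm)
    · have hws : w ∈ s := hcompmem v w hvs'.1 hwx hvw.adj_sub hvs'
      refine ⟨hws, ?_⟩
      intro hwz
      simp only [Set.mem_singleton_iff] at hwz
      obtain ⟨p', -, hup⟩ := hM'.1 (hM'.2 z)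
      have h1 : M'.Adj z v := hwz ▸ hvw.symm
      have hvx : v = x := (hup v h1).trans (hup x hMxz.symm).symm
      exact hsx v hvs' hvx
  rw [Set.ncard_diff_singleton_of_mem hzs] at heven2
  have hpos : 0 < s.ncard := (Set.ncard_pos (Set.toFinite s)).mpr ⟨z, hzs⟩
  obtain ⟨k, hk⟩ := heven1
  obtain ⟨l, hl⟩ := heven2
  omega
end

section
/- Let H be a 1-extendable graph and let G be a maximal element of the poset (ℰ(H), ⊆). Then every maximal barrier of G is a clique in G all of whose edges are free edges of G. -/
open SimpleGraph

variable {V : Type}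

/-- Every odd component of `G - S` sends a matching edge into `S`. -/
lemma odd_comp_matched_out [Finite V] {G : SimpleGraph V} {S : Set V}
    {M : G.Subgraph} (hM : M.IsPerfectMatching)
    (c : (G.induce (Sᶜ : Set V)).ConnectedComponent) (hodd : Odd (Nat.card c.supp)) :
    ∃ s ∈ S, ∃ w : (Sᶜ : Set V), w ∈ c.supp ∧ M.Adj s ↑w := by
  classical
  by_contra! h
  have hmatch : (M.induce (Subtype.val '' c.supp)).IsMatching := by
    rintro v hv
    obtain ⟨⟨v', hv'S⟩, hv'c, rfl⟩ := hv
    obtain ⟨w, hw, huniq⟩ := hM.1 (hM.2 v')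
    have hwS : w ∈ (Sᶜ : Set V) := fun hwS => h w hwS ⟨v', hv'S⟩ hv'c hw.symm
    have hwc : (⟨w, hwS⟩ : ↥(Sᶜ : Set V)) ∈ c.supp := by
      rw [SimpleGraph.ConnectedComponent.mem_supp_iff] at hv'c ⊢
      rw [← hv'c]
      exact SimpleGraph.ConnectedComponent.sound
        (SimpleGraph.Adj.reachable
          (by simpa [SimpleGraph.comap_adj] using (M.adj_sub hw).symm))
    refine ⟨w, ⟨⟨⟨v', hv'S⟩, hv'c, rfl⟩, ⟨⟨w, hwS⟩, hwc, rfl⟩, hw⟩, ?_⟩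
    rintro y ⟨-, -, hy⟩
    exact huniq y hy
  haveI : Fintype ↑(M.induce (Subtype.val '' c.supp)).verts := Fintype.ofFinite _
  have heven := hmatch.even_card
  rw [Set.toFinset_card, ← Nat.card_eq_fintype_card] at heven
  apply Nat.not_even_iff_odd.2 hodd
  have hcard : Nat.card ↑(M.induce (Subtype.val '' c.supp)).verts = Nat.card c.supp := by
    rw [show (M.induce (Subtype.val '' c.supp)).verts = Subtype.val '' c.supp from rfl,
      Nat.card_coe_set_eq, Nat.card_coe_set_eq,
      Set.ncard_image_of_injective _ Subtype.val_injective]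
  rwa [hcard] at heven

/-- No perfect matching uses an edge inside a barrier. -/
lemma barrier_no_inner_edge [Finite V] {G : SimpleGraph V} {S : Set V}
    (hS : IsBarrier G S) {M : G.Subgraph} (hM : M.IsPerfectMatching)
    {u v : V} (hu : u ∈ S) (hv : v ∈ S) (huv : M.Adj u v) : False := by
  classical
  have key : ∀ c : {c : (G.induce (Sᶜ : Set V)).ConnectedComponent // Odd (Nat.card c.supp)},
      ∃ s ∈ S \ {u}, ∃ w : (Sᶜ : Set V), w ∈ c.1.supp ∧ M.Adj s ↑w := by
    rintro ⟨c, hc⟩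
    obtain ⟨s, hs, w, hwc, hadj⟩ := odd_comp_matched_out hM c hc
    refine ⟨s, ⟨hs, ?_⟩, w, hwc, hadj⟩
    intro hsu
    rw [Set.mem_singleton_iff] at hsu
    subst hsu
    obtain ⟨p, hp, hpuniq⟩ := hM.1 (hM.2 s)
    have h1 : (w : V) = p := hpuniq _ hadj
    have h2 : v = p := hpuniq _ huv
    exact w.2 (h1 ▸ h2 ▸ hv)
  choose f hfS w hwsupp hadj using key
  have hinj : Function.Injective
      (fun c : {c : (G.induce (Sᶜ : Set V)).ConnectedComponent // Odd (Nat.card c.supp)} =>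
        (⟨f c, hfS c⟩ : ↥(S \ {u}))) := by
    intro c₁ c₂ hEq
    have hf : f c₁ = f c₂ := congrArg Subtype.val hEq
    obtain ⟨p, hp, hpuniq⟩ := hM.1 (hM.2 (f c₁))
    have h1 : (w c₁ : V) = p := hpuniq _ (hadj c₁)
    have h2 : (w c₂ : V) = p := hpuniq _ (hf ▸ hadj c₂)
    have hww : w c₁ = w c₂ := Subtype.ext (h1.trans h2.symm)
    have e1 := hwsupp c₁
    have e2 := hwsupp c₂
    rw [SimpleGraph.ConnectedComponent.mem_supp_iff] at e1 e2
    exact Subtype.ext (e1 ▸ e2 ▸ hww ▸ rfl)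
  have hle : oddComponentCount G S ≤ (S \ {u}).ncard := by
    rw [← Nat.card_coe_set_eq]
    exact Nat.card_le_card_of_injective _ hinj
  have hlt : (S \ {u}).ncard < S.ncard :=
    Set.ncard_diff_singleton_lt_of_mem hu (Set.toFinite S)
  rw [hS] at hle
  omega

/-- if `G` is maximal in `(ℰ(H), ⊆)`, then every maximal barrier of `G` is a
clique all of whose edges are free. -/
theorem maximal_elemSupergraph_barriers_are_free_cliques [Finite V]
    (H G : SimpleGraph V) (hH : OneExtendable H)
    (hG : G ∈ elemSupergraphs H)
    (hmax : ∀ K ∈ elemSupergraphs H, G ≤ K → K = G)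
    (B : Set V) (hB : IsMaximalBarrier G B) :
    G.IsClique B ∧ ∀ u ∈ B, ∀ v ∈ B, u ≠ v → ¬ IsExtendableEdge G u v := by
  classical
  constructor
  · rw [SimpleGraph.isClique_iff]
    intro u hu v hv hne
    set K : SimpleGraph V := G ⊔ SimpleGraph.edge u v with hK
    -- B is still a barrier of K
    have hind : K.induce (Bᶜ : Set V) = G.induce (Bᶜ : Set V) := by
      ext a b
      simp only [SimpleGraph.comap_adj, SimpleGraph.sup_adj, SimpleGraph.edge_adj, hK]
      constructor
      · rintro (hg | ⟨(⟨rfl, rfl⟩ | ⟨rfl, rfl⟩), -⟩)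
        · exact hg
        · exact absurd hu a.2
        · exact absurd hv a.2
      · exact Or.inl
    have hKB : IsBarrier K B := by
      unfold IsBarrier oddComponentCount at *
      rw [hind]
      exact hB.1
    -- every perfect matching of K avoids the new edge, hence lives in G
    have keyadj : ∀ (M : K.Subgraph), M.IsPerfectMatching →
        ∀ {a b : V}, M.Adj a b → G.Adj a b := by
      intro M hM a b hab
      rcases (SimpleGraph.sup_adj _ _ _ _).mp (M.adj_sub hab) with hg | he
      · exact hg
      · rcases (SimpleGraph.edge_adj u v a b).mp he with ⟨(⟨rfl, rfl⟩ | ⟨rfl, rfl⟩), -⟩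
        · exact absurd hab (fun h => barrier_no_inner_edge hKB hM hu hv h)
        · exact absurd hab.symm (fun h => barrier_no_inner_edge hKB hM hu hv h)
    have hnum : numPM K = numPM G := by
      apply Nat.card_congr
      exact {
        toFun := fun M =>
          ⟨⟨M.1.verts, M.1.Adj, fun h => keyadj M.1 M.2 h, fun h => M.1.edge_vert h,
            M.1.symm⟩, ⟨M.2.1, M.2.2⟩⟩
        invFun := fun M =>
          ⟨⟨M.1.verts, M.1.Adj, fun h => (SimpleGraph.sup_adj _ _ _ _).mpr
            (Or.inl (M.1.adj_sub h)), fun h => M.1.edge_vert h, M.1.symm⟩, ⟨M.2.1, M.2.2⟩⟩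
        left_inv := fun _ => rfl
        right_inv := fun _ => rfl }
    have hKmem : K ∈ elemSupergraphs H := ⟨le_trans hG.1 le_sup_left, by rw [hnum, hG.2]⟩
    have hKG : K = G := hmax K hKmem le_sup_left
    have hKadj : K.Adj u v := (SimpleGraph.sup_adj _ _ _ _).mpr
      (Or.inr ((SimpleGraph.edge_adj u v u v).mpr ⟨Or.inl ⟨rfl, rfl⟩, hne⟩))
    rwa [hKG] at hKadj
  · rintro u hu v hv hne ⟨M, hM, hadj⟩
    exact barrier_no_inner_edge hB.1 hM hu hv hadj
end

section
/- Let H be a 1-extendable graph. The map sending a cover set 𝓘 ∈ 𝒞(H) to the graph H_𝓘 obtained from H by adding all possible edges inside each part of 𝓘 is a bijection between 𝒞(H) and the set of graphs G ∈ ℰ(H) whose free subgraph is a disjoint union of cliques, each of which is a (not necessarily maximal) barrier of G. -/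
open SimpleGraph

variable {V : Type}

section AuxDev

open SimpleGraph

variable {V : Type}

private lemma finite_subgraph [Finite V] (G : SimpleGraph V) : Finite G.Subgraph := by
  let f : G.Subgraph → Set V × Set (V × V) := fun M => (M.verts, {p | M.Adj p.1 p.2})
  have hf : Function.Injective f := by
    intro M N h
    obtain ⟨h1, h2⟩ := Prod.mk.injEq _ _ _ _ ▸ h
    ext1
    · exact h1
    · ext u v
      exact Iff.of_eq (congrArg (fun (s : Set (V × V)) => ((u, v) ∈ s : Prop)) h2)
  exact Finite.of_injective f hf

/-- Transfer a subgraph along a graph inequality. -/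
private def liftSub {H G : SimpleGraph V} (hle : H ≤ G) (M : H.Subgraph) : G.Subgraph where
  verts := M.verts
  Adj := M.Adj
  adj_sub h := hle (M.adj_sub h)
  edge_vert h := M.edge_vert h
  symm := M.symm

private lemma liftSub_pm {H G : SimpleGraph V} (hle : H ≤ G) (M : H.Subgraph) :
    (liftSub hle M).IsPerfectMatching ↔ M.IsPerfectMatching := Iff.rfl

private lemma pm_unique {G : SimpleGraph V} {M : G.Subgraph} (hM : M.IsPerfectMatching)
    (v : V) : ∃! w, M.Adj v w := (Subgraph.isPerfectMatching_iff.mp hM) v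

/-- Parity: a set closed under the matching is even. -/
private lemma even_ncard_closed [Finite V] {G : SimpleGraph V} {M : G.Subgraph}
    (hM : M.IsPerfectMatching) {A : Set V}
    (hcl : ∀ v ∈ A, ∀ w, M.Adj v w → w ∈ A) : Even A.ncard := by
  have hmatch : (M.induce A).IsMatching := by
    intro v hv
    obtain ⟨w, hw, huniq⟩ := pm_unique hM v
    exact ⟨w, ⟨hv, hcl v hv w hw, hw⟩, fun y hy => huniq y hy.2.2⟩
  haveI : Fintype ↑(M.induce A).verts := Fintype.ofFinite _
  haveI : Fintype ↑A := Fintype.ofFinite _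
  have he := hmatch.even_card
  have hverts : (M.induce A).verts = A := rfl
  rw [Set.ncard_eq_toFinset_card' A]
  convert he using 2
  exact (Set.toFinset_congr hverts.symm).symm ▸ rfl

/-- An odd component of `G - S` has a vertex matched into `S`. -/
private lemma odd_comp_out [Finite V] {G : SimpleGraph V} {M : G.Subgraph}
    (hM : M.IsPerfectMatching) (S : Set V)
    (c : (G.induce (Sᶜ : Set V)).ConnectedComponent) (hodd : Odd (Nat.card c.supp)) :
    ∃ v : (Sᶜ : Set V), v ∈ c.supp ∧ ∃ w ∈ S, M.Adj ↑v w := by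
  by_contra h
  push_neg at h
  have hcl : ∀ v ∈ (Subtype.val '' c.supp : Set V), ∀ w, M.Adj v w →
      w ∈ (Subtype.val '' c.supp : Set V) := by
    rintro _ ⟨v, hv, rfl⟩ w hw
    have hwS : w ∉ S := fun hwS => h v hv w hwS hw
    refine ⟨⟨w, hwS⟩, ?_, rfl⟩
    rw [SimpleGraph.ConnectedComponent.mem_supp_iff] at hv ⊢
    rw [← hv]
    exact (SimpleGraph.ConnectedComponent.connectedComponentMk_eq_of_adj
      (by exact (M.adj_sub hw).symm : (G.induce (Sᶜ : Set V)).Adj ⟨w, hwS⟩ v)).symm ▸ rfl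
  have heven := even_ncard_closed hM hcl
  rw [Set.ncard_image_of_injective _ Subtype.val_injective] at heven
  rw [← Nat.card_coe_set_eq] at heven
  exact (Nat.not_even_iff_odd.2 hodd) heven

/-- Easy direction of Tutte: odd components are at most `|S|`. -/
private lemma tutte_easy [Finite V] {G : SimpleGraph V} {M : G.Subgraph}
    (hM : M.IsPerfectMatching) (S : Set V) : oddComponentCount G S ≤ S.ncard := by
  classical
  choose v hv w hw hadj using fun c :
    {c : (G.induce (Sᶜ : Set V)).ConnectedComponent // Odd (Nat.card c.supp)} =>
      odd_comp_out hM S c.1 c.2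
  have hinj : Function.Injective (fun c => (⟨w c, hw c⟩ : S)) := by
    intro c₁ c₂ h
    have hww : w c₁ = w c₂ := congrArg Subtype.val h
    obtain ⟨x, _, huniq⟩ := pm_unique hM (w c₁)
    have e1 : (v c₁ : V) = x := huniq _ (hadj c₁).symm
    have e2 : (v c₂ : V) = x := huniq _ (hww ▸ (hadj c₂).symm)
    have hvv : v c₁ = v c₂ := Subtype.ext (e1.trans e2.symm)
    have h1 := hv c₁; have h2 := hv c₂
    rw [SimpleGraph.ConnectedComponent.mem_supp_iff] at h1 h2
    exact Subtype.ext (by rw [← h1, ← h2, hvv])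
  calc oddComponentCount G S ≤ Nat.card S := Nat.card_le_card_of_injective _ hinj
    _ = S.ncard := Nat.card_coe_set_eq S

/-- The master bijection for a barrier. -/
private lemma barrier_f [Finite V] {G : SimpleGraph V} {M : G.Subgraph} {S : Set V}
    (hS : IsBarrier G S) (hM : M.IsPerfectMatching) :
    ∃ f : {c : (G.induce (Sᶜ : Set V)).ConnectedComponent // Odd (Nat.card c.supp)} → S,
      Function.Bijective f ∧ ∀ c, ∃ v : (Sᶜ : Set V), v ∈ c.1.supp ∧ M.Adj ↑v ↑(f c) := by
  classical
  choose v hv w hw hadj using fun c :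
    {c : (G.induce (Sᶜ : Set V)).ConnectedComponent // Odd (Nat.card c.supp)} =>
      odd_comp_out hM S c.1 c.2
  have hinj : Function.Injective (fun c => (⟨w c, hw c⟩ : S)) := by
    intro c₁ c₂ h
    have hww : w c₁ = w c₂ := congrArg Subtype.val h
    obtain ⟨x, _, huniq⟩ := pm_unique hM (w c₁)
    have e1 : (v c₁ : V) = x := huniq _ (hadj c₁).symm
    have e2 : (v c₂ : V) = x := huniq _ (hww ▸ (hadj c₂).symm)
    have hvv : v c₁ = v c₂ := Subtype.ext (e1.trans e2.symm)
    have h1 := hv c₁; have h2 := hv c₂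
    rw [SimpleGraph.ConnectedComponent.mem_supp_iff] at h1 h2
    exact Subtype.ext (by rw [← h1, ← h2, hvv])
  refine ⟨fun c => ⟨w c, hw c⟩, ?_, fun c => ⟨v c, hv c, hadj c⟩⟩
  rw [Nat.bijective_iff_injective_and_card]
  exact ⟨hinj, by rw [Nat.card_coe_set_eq]; exact hS⟩

/-- A perfect matching has no edge inside a barrier. -/
private lemma barrier_no_inside [Finite V] {G : SimpleGraph V} {M : G.Subgraph} {S : Set V}
    (hS : IsBarrier G S) (hM : M.IsPerfectMatching) :
    ∀ u ∈ S, ∀ w, M.Adj u w → w ∉ S := by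
  intro u hu x hadj hxS
  obtain ⟨f, hbij, hspec⟩ := barrier_f hS hM
  obtain ⟨c, hc⟩ := hbij.2 ⟨u, hu⟩
  obtain ⟨vc, hvc, hadjc⟩ := hspec c
  have hcu : (↑(f c) : V) = u := congrArg Subtype.val hc
  obtain ⟨y, _, huniq⟩ := pm_unique hM u
  have e1 : x = y := huniq _ hadj
  have e2 : (vc : V) = y := huniq _ (by rw [← hcu]; exact hadjc.symm)
  exact vc.2 (by rw [e2, ← e1]; exact hxS)

/-- Each component has at most one vertex matched into a barrier. -/
private lemma barrier_unique_out [Finite V] {G : SimpleGraph V} {M : G.Subgraph} {S : Set V}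
    (hS : IsBarrier G S) (hM : M.IsPerfectMatching)
    (c : (G.induce (Sᶜ : Set V)).ConnectedComponent) (v₁ v₂ : (Sᶜ : Set V))
    (h₁ : v₁ ∈ c.supp) (h₂ : v₂ ∈ c.supp) {w₁ w₂ : V} (hw₁ : w₁ ∈ S) (hw₂ : w₂ ∈ S)
    (ha₁ : M.Adj ↑v₁ w₁) (ha₂ : M.Adj ↑v₂ w₂) : v₁ = v₂ := by
  obtain ⟨f, hbij, hspec⟩ := barrier_f hS hM
  obtain ⟨c₁, hc₁⟩ := hbij.2 ⟨w₁, hw₁⟩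
  obtain ⟨c₂, hc₂⟩ := hbij.2 ⟨w₂, hw₂⟩
  obtain ⟨u₁, hu₁, hadj₁⟩ := hspec c₁
  obtain ⟨u₂, hu₂, hadj₂⟩ := hspec c₂
  have e₁ : (↑(f c₁) : V) = w₁ := congrArg Subtype.val hc₁
  have e₂ : (↑(f c₂) : V) = w₂ := congrArg Subtype.val hc₂
  obtain ⟨x₁, _, huniq₁⟩ := pm_unique hM w₁
  obtain ⟨x₂, _, huniq₂⟩ := pm_unique hM w₂
  have hv₁u₁ : v₁ = u₁ := Subtype.ext
    ((huniq₁ _ ha₁.symm).trans (huniq₁ _ (by rw [← e₁]; exact hadj₁.symm)).symm)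
  have hv₂u₂ : v₂ = u₂ := Subtype.ext
    ((huniq₂ _ ha₂.symm).trans (huniq₂ _ (by rw [← e₂]; exact hadj₂.symm)).symm)
  have hcc₁ : c₁.1 = c := by
    rw [SimpleGraph.ConnectedComponent.mem_supp_iff] at hu₁ h₁
    rw [← hu₁, ← h₁, hv₁u₁]
  have hcc₂ : c₂.1 = c := by
    rw [SimpleGraph.ConnectedComponent.mem_supp_iff] at hu₂ h₂
    rw [← hu₂, ← h₂, hv₂u₂]
  have : c₁ = c₂ := Subtype.ext (hcc₁.trans hcc₂.symm)
  have hww : w₁ = w₂ := by rw [← e₁, ← e₂, this]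
  obtain ⟨x, _, huniq⟩ := pm_unique hM w₁
  exact Subtype.ext ((huniq _ ha₁.symm).trans (huniq _ (hww ▸ ha₂.symm)).symm)

/-- Equal reachability gives equal odd component counts. -/
private lemma oddCC_congr {W : Type} (G₁ G₂ : SimpleGraph W)
    (h : ∀ a b : W, G₁.Reachable a b ↔ G₂.Reachable a b) :
    Nat.card {c : G₁.ConnectedComponent // Odd (Nat.card c.supp)} =
      Nat.card {c : G₂.ConnectedComponent // Odd (Nat.card c.supp)} := by
  let e : G₁.ConnectedComponent ≃ G₂.ConnectedComponent :=
    ⟨Quot.lift (fun v => G₂.connectedComponentMk v)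
        (fun a b hab => SimpleGraph.ConnectedComponent.sound ((h a b).1 hab)),
      Quot.lift (fun v => G₁.connectedComponentMk v)
        (fun a b hab => SimpleGraph.ConnectedComponent.sound ((h a b).2 hab)),
      fun c => by induction c using SimpleGraph.ConnectedComponent.ind; rfl,
      fun c => by induction c using SimpleGraph.ConnectedComponent.ind; rfl⟩
  have hmk : ∀ v : W, e (G₁.connectedComponentMk v) = G₂.connectedComponentMk v :=
    fun v => rfl
  have hsupp : ∀ c : G₁.ConnectedComponent, (e c).supp = c.supp := by
    intro c
    ext v
    simp only [SimpleGraph.ConnectedComponent.mem_supp_iff]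
    constructor
    · intro hv
      apply e.injective
      rw [hmk]
      exact hv
    · intro hv
      rw [← hmk]
      exact congrArg e hv
  exact Nat.card_congr (Equiv.subtypeEquiv e (fun c => by rw [hsupp c]))

/-- Comparison of odd component counts between a graph and a supergraph, given a barrier of
the supergraph and a matching of the subgraph. -/
private lemma oddCC_le_of_le [Finite V] {H G : SimpleGraph V} (hle : H ≤ G) {B : Set V}
    (hBG : IsBarrier G B) {M : H.Subgraph} (hM : M.IsPerfectMatching) :
    oddComponentCount G B ≤ oddComponentCount H B := by
  classical
  have hMgpm : (liftSub hle M).IsPerfectMatching := hM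
  choose v₀ hv₀ w₀ hw₀ hadj₀ using fun c :
    {c : (G.induce (Bᶜ : Set V)).ConnectedComponent // Odd (Nat.card c.supp)} =>
      odd_comp_out hMgpm B c.1 c.2
  have hind : H.induce (Bᶜ : Set V) ≤ G.induce (Bᶜ : Set V) := by
    intro a b hab
    exact hle hab
  have hGcomp : ∀ (c : {c : (G.induce (Bᶜ : Set V)).ConnectedComponent //
      Odd (Nat.card c.supp)}) (u : (Bᶜ : Set V)),
      (H.induce (Bᶜ : Set V)).connectedComponentMk u =
        (H.induce (Bᶜ : Set V)).connectedComponentMk (v₀ c) → u ∈ c.1.supp := by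
    intro c u hu
    have hr : (H.induce (Bᶜ : Set V)).Reachable u (v₀ c) :=
      SimpleGraph.ConnectedComponent.exact hu
    have hrG : (G.induce (Bᶜ : Set V)).Reachable u (v₀ c) := hr.mono hind
    rw [SimpleGraph.ConnectedComponent.mem_supp_iff]
    rw [SimpleGraph.ConnectedComponent.sound hrG]
    exact hv₀ c
  have hoddH : ∀ c, Odd (Nat.card
      ((H.induce (Bᶜ : Set V)).connectedComponentMk (v₀ c)).supp) := by
    intro c
    set d := (H.induce (Bᶜ : Set V)).connectedComponentMk (v₀ c) with hd
    set A : Set V := (Subtype.val '' d.supp) \ {(↑(v₀ c) : V)} with hA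
    have hvmem : (↑(v₀ c) : V) ∈ Subtype.val '' d.supp :=
      ⟨v₀ c, by rw [SimpleGraph.ConnectedComponent.mem_supp_iff], rfl⟩
    have hcl : ∀ x ∈ A, ∀ y, (liftSub hle M).Adj x y → y ∈ A := by
      rintro x ⟨⟨u, hu, rfl⟩, hne⟩ y hy
      by_cases hyB : y ∈ B
      · exfalso
        have huc : u ∈ c.1.supp := hGcomp c u (by
          rw [SimpleGraph.ConnectedComponent.mem_supp_iff] at hu
          rw [hu])
        have := barrier_unique_out hBG hMgpm c.1 u (v₀ c) huc (hv₀ c) hyB (hw₀ c)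
          hy (hadj₀ c)
        exact hne (by rw [this]; exact rfl)
      · have hyc : y ∈ (Bᶜ : Set V) := hyB
        have hHadj : H.Adj ↑u y := M.adj_sub hy
        have hyd : (⟨y, hyc⟩ : (Bᶜ : Set V)) ∈ d.supp := by
          rw [SimpleGraph.ConnectedComponent.mem_supp_iff]
          rw [SimpleGraph.ConnectedComponent.mem_supp_iff] at hu
          rw [← hu]
          exact (SimpleGraph.ConnectedComponent.connectedComponentMk_eq_of_adj
            (show (H.induce (Bᶜ : Set V)).Adj ⟨y, hyc⟩ u from hHadj.symm))
        refine ⟨⟨⟨y, hyc⟩, hyd, rfl⟩, ?_⟩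
        intro hyv
        have hyv' : y = (↑(v₀ c) : V) := hyv
        obtain ⟨x', _, huniq⟩ := pm_unique hMgpm (↑(v₀ c) : V)
        have e1 : (↑u : V) = x' := huniq _ (by rw [← hyv']; exact hy.symm)
        have e2 : w₀ c = x' := huniq _ (hadj₀ c)
        have : (↑u : V) ∈ B := by rw [e1, ← e2]; exact hw₀ c
        exact u.2 this
    have heven := even_ncard_closed hMgpm hcl
    have hins : A.ncard + 1 = (Subtype.val '' d.supp : Set V).ncard :=
      Set.ncard_diff_singleton_add_one hvmem (Set.toFinite _)
    have himg : (Subtype.val '' d.supp : Set V).ncard = Nat.card d.supp := by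
      rw [Set.ncard_image_of_injective _ Subtype.val_injective, Nat.card_coe_set_eq]
    have : Nat.card d.supp = A.ncard + 1 := by rw [← himg, ← hins]
    rw [this]
    exact Even.add_one heven
  let F : {c : (G.induce (Bᶜ : Set V)).ConnectedComponent // Odd (Nat.card c.supp)} →
      {d : (H.induce (Bᶜ : Set V)).ConnectedComponent // Odd (Nat.card d.supp)} :=
    fun c => ⟨(H.induce (Bᶜ : Set V)).connectedComponentMk (v₀ c), hoddH c⟩
  have hFinj : Function.Injective F := by
    intro c₁ c₂ hF
    have h1 : (H.induce (Bᶜ : Set V)).connectedComponentMk (v₀ c₁) =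
        (H.induce (Bᶜ : Set V)).connectedComponentMk (v₀ c₂) := congrArg Subtype.val hF
    have hu : v₀ c₁ ∈ c₂.1.supp := hGcomp c₂ (v₀ c₁) h1
    have hv := hv₀ c₁
    rw [SimpleGraph.ConnectedComponent.mem_supp_iff] at hu hv
    exact Subtype.ext (by rw [← hv, ← hu])
  haveI : Finite ((H.induce (Bᶜ : Set V)).ConnectedComponent) :=
    Finite.of_surjective (H.induce (Bᶜ : Set V)).connectedComponentMk
      (fun c => Quot.exists_rep c)
  exact Nat.card_le_card_of_injective F hFinj

/-- In a 1-extendable graph, every component of `H - B` for a nonempty barrier `B` is odd. -/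
private lemma all_comps_odd [Finite V] {H : SimpleGraph V} (hH : OneExtendable H) {B : Set V}
    (hBne : B.Nonempty) (hB : IsBarrier H B) :
    ∀ c : (H.induce (Bᶜ : Set V)).ConnectedComponent, Odd (Nat.card c.supp) := by
  intro c
  by_contra hodd
  obtain ⟨b, hb⟩ := hBne
  obtain ⟨v₀, hv₀⟩ := Quot.exists_rep c
  have key : ∀ (x bb : V) (p : H.Walk x bb), bb ∈ B → ∀ (hx : x ∈ (Bᶜ : Set V)),
      (H.induce (Bᶜ : Set V)).connectedComponentMk ⟨x, hx⟩ = c →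
      ∃ (y : V) (hy : y ∈ (Bᶜ : Set V)) (z : V), H.Adj y z ∧ z ∈ B ∧
        (H.induce (Bᶜ : Set V)).connectedComponentMk ⟨y, hy⟩ = c := by
    intro x bb p
    induction p with
    | nil => exact fun hbb hx _ => absurd hbb hx
    | @cons x' z _ hadj q ih =>
      intro hbb hx hc
      by_cases hz : z ∈ B
      · exact ⟨x', hx, z, hadj, hz, hc⟩
      · have hzc : z ∈ (Bᶜ : Set V) := hz
        refine ih hbb hzc ?_
        rw [← hc]
        exact (SimpleGraph.ConnectedComponent.connectedComponentMk_eq_of_adj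
          (show (H.induce (Bᶜ : Set V)).Adj ⟨z, hzc⟩ ⟨x', hx⟩ from hadj.symm))
  obtain ⟨p⟩ := hH.1.preconnected v₀.1 b
  obtain ⟨y, hy, z, hyz, hzB, hyc⟩ := key v₀.1 b p hb v₀.2 (by rw [Subtype.coe_eta]; exact hv₀)
  obtain ⟨M, hM, hMadj⟩ := hH.2.2 hyz
  obtain ⟨f, hbij, hspec⟩ := barrier_f hB hM
  obtain ⟨c', hc'⟩ := hbij.2 ⟨z, hzB⟩
  obtain ⟨v', hv', hadj'⟩ := hspec c'
  have hfz : (↑(f c') : V) = z := congrArg Subtype.val hc'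
  obtain ⟨x, _, huniq⟩ := pm_unique hM z
  have e1 : y = x := huniq _ hMadj.symm
  have e2 : (v' : V) = x := huniq _ (by rw [← hfz]; exact hadj'.symm)
  have hvy : v' = (⟨y, hy⟩ : (Bᶜ : Set V)) := Subtype.ext (e2.trans e1.symm)
  rw [SimpleGraph.ConnectedComponent.mem_supp_iff, hvy, hyc] at hv'
  exact hodd (hv' ▸ c'.2)

/-- If `G ⊇ H`, `B` a nonempty barrier of both with `H` 1-extendable, then `G`-reachability
within `Bᶜ` implies `H`-reachability. -/
private lemma same_comp [Finite V] {H G : SimpleGraph V} (hH : OneExtendable H) (hle : H ≤ G)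
    {B : Set V} (hBne : B.Nonempty) (hBH : IsBarrier H B) (hBG : IsBarrier G B) :
    ∀ u v : (Bᶜ : Set V), (G.induce (Bᶜ : Set V)).Reachable u v →
      (H.induce (Bᶜ : Set V)).Reachable u v := by
  have hind : H.induce (Bᶜ : Set V) ≤ G.induce (Bᶜ : Set V) := by
    intro a b hab
    exact hle hab
  haveI : Finite ((G.induce (Bᶜ : Set V)).ConnectedComponent) :=
    Finite.of_surjective (G.induce (Bᶜ : Set V)).connectedComponentMk
      (fun c => Quot.exists_rep c)
  haveI : Finite ((H.induce (Bᶜ : Set V)).ConnectedComponent) :=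
    Finite.of_surjective (H.induce (Bᶜ : Set V)).connectedComponentMk
      (fun c => Quot.exists_rep c)
  let ψ : (H.induce (Bᶜ : Set V)).ConnectedComponent →
      (G.induce (Bᶜ : Set V)).ConnectedComponent :=
    SimpleGraph.ConnectedComponent.map (SimpleGraph.Hom.ofLE hind)
  have hψmk : ∀ w : (Bᶜ : Set V), ψ ((H.induce (Bᶜ : Set V)).connectedComponentMk w) =
      (G.induce (Bᶜ : Set V)).connectedComponentMk w := fun w => rfl
  have hψsurj : Function.Surjective ψ := by
    intro d
    obtain ⟨w, hw⟩ := Quot.exists_rep d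
    exact ⟨(H.induce (Bᶜ : Set V)).connectedComponentMk w, by rw [hψmk]; exact hw⟩
  have hcardH : Nat.card ((H.induce (Bᶜ : Set V)).ConnectedComponent) = B.ncard := by
    have heq : Nat.card {c : (H.induce (Bᶜ : Set V)).ConnectedComponent //
        Odd (Nat.card c.supp)} = Nat.card ((H.induce (Bᶜ : Set V)).ConnectedComponent) :=
      Nat.card_congr (Equiv.subtypeUnivEquiv (all_comps_odd hH hBne hBH))
    rw [← heq]
    exact hBH
  have hcardG_ge : B.ncard ≤ Nat.card ((G.induce (Bᶜ : Set V)).ConnectedComponent) := by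
    rw [← hBG]
    exact Nat.card_le_card_of_injective Subtype.val Subtype.val_injective
  have hcardG_le : Nat.card ((G.induce (Bᶜ : Set V)).ConnectedComponent) ≤
      Nat.card ((H.induce (Bᶜ : Set V)).ConnectedComponent) :=
    Nat.card_le_card_of_surjective ψ hψsurj
  have hψbij : Function.Bijective ψ :=
    (Nat.bijective_iff_surjective_and_card ψ).2 ⟨hψsurj, by omega⟩
  intro u v hreach
  have h1 : ψ ((H.induce (Bᶜ : Set V)).connectedComponentMk u) =
      ψ ((H.induce (Bᶜ : Set V)).connectedComponentMk v) := by
    rw [hψmk, hψmk]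
    exact SimpleGraph.ConnectedComponent.sound hreach
  exact SimpleGraph.ConnectedComponent.exact (hψbij.1 h1)

private lemma fillGraph_adj {H : SimpleGraph V} {I : Set (Set V)} {u v : V} :
    (fillGraph H I).Adj u v ↔ H.Adj u v ∨ (u ≠ v ∧ ∃ B ∈ I, u ∈ B ∧ v ∈ B) := by
  show (H ⊔ _).Adj u v ↔ _
  rw [SimpleGraph.sup_adj, SimpleGraph.fromRel_adj]
  constructor
  · rintro (h | ⟨hne, (⟨B, hB, hu, hv⟩ | ⟨B, hB, hv, hu⟩)⟩)
    · exact Or.inl h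
    · exact Or.inr ⟨hne, B, hB, hu, hv⟩
    · exact Or.inr ⟨hne, B, hB, hu, hv⟩
  · rintro (h | ⟨hne, B, hB, hu, hv⟩)
    · exact Or.inl h
    · exact Or.inr ⟨hne, Or.inl ⟨B, hB, hu, hv⟩⟩

private lemma le_fillGraph {H : SimpleGraph V} {I : Set (Set V)} : H ≤ fillGraph H I :=
  le_sup_left

private lemma ext_of_le {H G : SimpleGraph V} (hle : H ≤ G) {u v : V}
    (h : IsExtendableEdge H u v) : IsExtendableEdge G u v := by
  obtain ⟨M, hM, hadj⟩ := h
  exact ⟨liftSub hle M, hM, hadj⟩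

/-- Barriers of a 1-extendable graph are independent sets. -/
private lemma barrier_indep [Finite V] {H : SimpleGraph V} (hH : OneExtendable H) {B : Set V}
    (hB : IsBarrier H B) : ∀ u ∈ B, ∀ v ∈ B, ¬ H.Adj u v := by
  intro u hu v hv hadj
  obtain ⟨M, hM, hMadj⟩ := hH.2.2 hadj
  exact barrier_no_inside hB hM u hu v hMadj hv

/-- Perfect matchings of `H` correspond to perfect matchings of `G` lying inside `H`. -/
private def pmSubEquiv {H G : SimpleGraph V} (hle : H ≤ G) :
    {M : H.Subgraph // M.IsPerfectMatching} ≃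
      {M : G.Subgraph // M.IsPerfectMatching ∧ ∀ u v, M.Adj u v → H.Adj u v} where
  toFun M := ⟨liftSub hle M.1, M.2, fun _ _ h => M.1.adj_sub h⟩
  invFun N := ⟨⟨N.1.verts, N.1.Adj, fun h => N.2.2 _ _ h, fun h => N.1.edge_vert h,
    N.1.symm⟩, N.2.1⟩
  left_inv _ := rfl
  right_inv _ := rfl

/-- If every perfect matching of `G` lies in `H ≤ G`, the matching counts agree. -/
private lemma numPM_eq_of_all [Finite V] {H G : SimpleGraph V} (hle : H ≤ G)
    (hall : ∀ M : G.Subgraph, M.IsPerfectMatching → ∀ u v, M.Adj u v → H.Adj u v) :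
    numPM G = numPM H := by
  have e2 : {M : G.Subgraph // M.IsPerfectMatching} ≃
      {M : G.Subgraph // M.IsPerfectMatching ∧ ∀ u v, M.Adj u v → H.Adj u v} :=
    Equiv.subtypeEquivRight (fun M => ⟨fun hp => ⟨hp, hall M hp⟩, fun hp => hp.1⟩)
  exact Nat.card_congr (e2.trans (pmSubEquiv hle).symm)

/-- Conversely, if the matching counts agree then every perfect matching of `G` lies in `H`. -/
private lemma all_of_numPM_eq [Finite V] {H G : SimpleGraph V} (hle : H ≤ G)
    (hnum : numPM G = numPM H) :
    ∀ M : G.Subgraph, M.IsPerfectMatching → ∀ u v, M.Adj u v → H.Adj u v := by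
  intro M hM u v hadj
  haveI := finite_subgraph G
  haveI := finite_subgraph H
  let ι : {M : H.Subgraph // M.IsPerfectMatching} → {M : G.Subgraph // M.IsPerfectMatching} :=
    fun N => ⟨liftSub hle N.1, N.2⟩
  have hinj : Function.Injective ι := by
    intro N₁ N₂ hN
    have h1 : (liftSub hle N₁.1) = liftSub hle N₂.1 := congrArg Subtype.val hN
    exact Subtype.ext (SimpleGraph.Subgraph.ext (congrArg (fun (X : G.Subgraph) => X.verts) h1)
      (congrArg (fun (X : G.Subgraph) => X.Adj) h1))
  have hbij : Function.Bijective ι :=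
    (Nat.bijective_iff_injective_and_card ι).2 ⟨hinj, hnum.symm⟩
  obtain ⟨N, hN⟩ := hbij.2 ⟨M, hM⟩
  have hNM : liftSub hle N.1 = M := congrArg Subtype.val hN
  have hadj' : (liftSub hle N.1).Adj u v := by rw [hNM]; exact hadj
  exact N.1.adj_sub hadj'



/-- Each part of a cover set is a barrier of the filled graph. -/
private lemma fill_barrier [Finite V] {H : SimpleGraph V} {I : Set (Set V)}
    (hI : IsCoverSet H I) {B : Set V} (hB : B ∈ I) : IsBarrier (fillGraph H I) B := by
  have hreach : ∀ u v : (Bᶜ : Set V),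
      ((fillGraph H I).induce (Bᶜ : Set V)).Reachable u v ↔
        (H.induce (Bᶜ : Set V)).Reachable u v := by
    intro u v
    constructor
    · intro h
      obtain ⟨p⟩ := h
      induction p with
      | nil => exact SimpleGraph.Reachable.refl _
      | @cons a b _ hadj q ih =>
        refine SimpleGraph.Reachable.trans ?_ ih
        have hGab : (fillGraph H I).Adj ↑a ↑b := hadj
        rw [fillGraph_adj] at hGab
        rcases hGab with h' | ⟨hne, B', hB', haB', hbB'⟩
        · exact SimpleGraph.Adj.reachable (show (H.induce (Bᶜ : Set V)).Adj a b from h')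
        · have hBB' : B ≠ B' := fun he => a.2 (he ▸ haB')
          have hnm : ¬ MeetsMultipleComponents H B B' :=
            fun hmm => hI.2.1 B hB B' hB' hBB' (Or.inr (Or.inr hmm))
          by_contra hnr
          refine hnm ⟨(H.induce (Bᶜ : Set V)).connectedComponentMk a,
            (H.induce (Bᶜ : Set V)).connectedComponentMk b, ?_, ⟨a, rfl, haB'⟩,
            ⟨b, rfl, hbB'⟩⟩
          intro he
          exact hnr (SimpleGraph.ConnectedComponent.exact he)
    · intro h
      refine h.mono ?_
      intro a b hab
      exact le_fillGraph hab
  have heq : oddComponentCount (fillGraph H I) B = oddComponentCount H B :=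
    oddCC_congr ((fillGraph H I).induce (Bᶜ : Set V)) (H.induce (Bᶜ : Set V))
      (fun a b => hreach a b)
  show oddComponentCount (fillGraph H I) B = B.ncard
  rw [heq]
  exact (hI.1 B hB).2


/-- Perfect matchings of a filled graph only use edges of `H`. -/
private lemma fill_pm_le [Finite V] {H : SimpleGraph V} {I : Set (Set V)}
    (hI : IsCoverSet H I) :
    ∀ M : (fillGraph H I).Subgraph, M.IsPerfectMatching → ∀ u v, M.Adj u v → H.Adj u v := by
  intro M hM u v hadj
  have hGadj := M.adj_sub hadj
  rw [fillGraph_adj] at hGadj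
  rcases hGadj with h | ⟨hne, B, hB, hu, hv⟩
  · exact h
  · exact absurd hv (barrier_no_inside (fill_barrier hI hB) hM u hu v hadj)

/-- Filling is injective on cover sets (one inclusion). -/
private lemma cover_subset_of_fill_eq [Finite V] {H : SimpleGraph V} (hH : OneExtendable H)
    {I₁ I₂ : Set (Set V)} (h₁ : IsCoverSet H I₁) (h₂ : IsCoverSet H I₂)
    (heq : fillGraph H I₁ = fillGraph H I₂) : I₁ ⊆ I₂ := by
  have mono : ∀ {J₁ J₂ : Set (Set V)}, IsCoverSet H J₁ → IsCoverSet H J₂ →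
      fillGraph H J₁ = fillGraph H J₂ → ∀ {u v : V}, u ≠ v →
      (∃ B ∈ J₁, u ∈ B ∧ v ∈ B) → ∃ B ∈ J₂, u ∈ B ∧ v ∈ B := by
    intro J₁ J₂ hJ₁ hJ₂ he u v hne ⟨B, hB, hu, hv⟩
    have h1 : (fillGraph H J₁).Adj u v := fillGraph_adj.mpr (Or.inr ⟨hne, B, hB, hu, hv⟩)
    rw [he, fillGraph_adj] at h1
    rcases h1 with h' | ⟨_, B', hB', hu', hv'⟩
    · exact absurd h' (barrier_indep hH (hJ₁.1 B hB).2 u hu v hv)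
    · exact ⟨B', hB', hu', hv'⟩
  intro B hB
  obtain ⟨v₀, hv₀⟩ := (h₁.1 B hB).1
  obtain ⟨B', ⟨hB', hv₀'⟩, huniq'⟩ := h₂.2.2 v₀
  have hBB' : B = B' := by
    apply Set.Subset.antisymm
    · intro x hx
      by_cases hxv : x = v₀
      · rw [hxv]; exact hv₀'
      · obtain ⟨B'', hB'', hx'', hv''⟩ := mono h₁ h₂ heq hxv ⟨B, hB, hx, hv₀⟩
        rw [huniq' B'' ⟨hB'', hv''⟩] at hx''
        exact hx''
    · intro x hx
      by_cases hxv : x = v₀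
      · rw [hxv]; exact hv₀
      · obtain ⟨B'', hB'', hx'', hv''⟩ := mono h₂ h₁ heq.symm hxv ⟨B', hB', hx, hv₀'⟩
        obtain ⟨Bu, hBu, huu⟩ := h₁.2.2 v₀
        rw [huu B'' ⟨hB'', hv''⟩, ← huu B ⟨hB, hv₀⟩] at hx''
        exact hx''
  rw [hBB']
  exact hB'

end AuxDev
/-- filling in the parts of a cover set is a bijection between `𝒞(H)` and
the graphs in `ℰ(H)` whose free subgraph is a disjoint union of cliques, each of which
is a barrier. -/
theorem coverSet_fillGraph_bijOn [Finite V] (H : SimpleGraph V) (hH : OneExtendable H) :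
    Set.BijOn (fillGraph H) {I : Set (Set V) | IsCoverSet H I}
      {G : SimpleGraph V | G ∈ elemSupergraphs H ∧
        ∃ J : Set (Set V), (∀ v : V, ∃! B, B ∈ J ∧ v ∈ B) ∧
          (∀ B ∈ J, IsBarrier G B) ∧
          ∀ u v : V, (freeSubgraph G).Adj u v ↔ (u ≠ v ∧ ∃ B ∈ J, u ∈ B ∧ v ∈ B)} := by
  classical
  refine ⟨?_, ?_, ?_⟩
  · -- MapsTo
    intro I hI
    simp only [Set.mem_setOf_eq] at hI ⊢
    refine ⟨⟨le_fillGraph, numPM_eq_of_all le_fillGraph (fill_pm_le hI)⟩, I, hI.2.2,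
      fun B hB => fill_barrier hI hB, ?_⟩
    intro u v
    constructor
    · rintro ⟨hGadj, hnext⟩
      rw [fillGraph_adj] at hGadj
      rcases hGadj with h' | hpart
      · exact absurd (ext_of_le le_fillGraph (hH.2.2 h')) hnext
      · exact hpart
    · rintro ⟨hne, B, hB, hu, hv⟩
      refine ⟨fillGraph_adj.mpr (Or.inr ⟨hne, B, hB, hu, hv⟩), ?_⟩
      rintro ⟨M, hM, hMadj⟩
      exact (barrier_no_inside (fill_barrier hI hB) hM u hu v hMadj) hv
  · -- InjOn
    intro I₁ h₁ I₂ h₂ heq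
    exact Set.Subset.antisymm (cover_subset_of_fill_eq hH h₁ h₂ heq)
      (cover_subset_of_fill_eq hH h₂ h₁ heq.symm)
  · -- SurjOn
    intro G hG
    simp only [Set.mem_setOf_eq] at hG
    obtain ⟨⟨hle, hnum⟩, J, hJpart, hJbar, hJfree⟩ := hG
    obtain ⟨MH, hMH⟩ := hH.2.1
    have hall := all_of_numPM_eq hle hnum
    set I : Set (Set V) := {B | B ∈ J ∧ B.Nonempty} with hIdef
    have hIpart : ∀ v : V, ∃! B, B ∈ I ∧ v ∈ B := by
      intro v
      obtain ⟨B, ⟨hBJ, hvB⟩, huniq⟩ := hJpart v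
      exact ⟨B, ⟨⟨hBJ, ⟨v, hvB⟩⟩, hvB⟩, fun B' hB' => huniq B' ⟨hB'.1.1, hB'.2⟩⟩
    have hbarH : ∀ B ∈ I, IsBarrier H B := by
      intro B hB
      have hBG := hJbar B hB.1
      have hle1 : oddComponentCount H B ≤ B.ncard := tutte_easy hMH B
      have hge : B.ncard ≤ oddComponentCount H B := by
        calc B.ncard = oddComponentCount G B := hBG.symm
          _ ≤ oddComponentCount H B := oddCC_le_of_le hle hBG hMH
      exact le_antisymm hle1 hge
    have hdisj : ∀ B₁ ∈ I, ∀ B₂ ∈ I, B₁ ≠ B₂ → ¬(B₁ ∩ B₂).Nonempty := by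
      rintro B₁ hB₁ B₂ hB₂ hne ⟨x, hx₁, hx₂⟩
      obtain ⟨B, hBx, huniq⟩ := hIpart x
      exact hne ((huniq B₁ ⟨hB₁, hx₁⟩).trans (huniq B₂ ⟨hB₂, hx₂⟩).symm)
    have hmmc : ∀ B₁ ∈ I, ∀ B₂ ∈ I, B₁ ≠ B₂ → ¬ MeetsMultipleComponents H B₂ B₁ := by
      intro B₁ hB₁ B₂ hB₂ hne hmm
      obtain ⟨c₁, c₂, hcc, ⟨x₁, hx₁c, hx₁B⟩, ⟨x₂, hx₂c, hx₂B⟩⟩ := hmm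
      have hxne : (x₁ : V) ≠ x₂ := by
        intro he
        apply hcc
        rw [SimpleGraph.ConnectedComponent.mem_supp_iff] at hx₁c hx₂c
        rw [← hx₁c, ← hx₂c, Subtype.ext he]
      have hadjfree : (freeSubgraph G).Adj ↑x₁ ↑x₂ :=
        (hJfree _ _).mpr ⟨hxne, B₁, hB₁.1, hx₁B, hx₂B⟩
      have hadj : G.Adj ↑x₁ ↑x₂ := hadjfree.1
      have hreachG : (G.induce ((B₂)ᶜ : Set V)).Reachable x₁ x₂ :=
        SimpleGraph.Adj.reachable (show (G.induce ((B₂)ᶜ : Set V)).Adj x₁ x₂ from hadj)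
      have hH2 := hbarH B₂ hB₂
      have hreachH := same_comp hH hle hB₂.2 hH2 (hJbar B₂ hB₂.1) x₁ x₂ hreachG
      apply hcc
      rw [SimpleGraph.ConnectedComponent.mem_supp_iff] at hx₁c hx₂c
      rw [← hx₁c, ← hx₂c]
      exact SimpleGraph.ConnectedComponent.sound hreachH
    have hnc : ∀ B₁ ∈ I, ∀ B₂ ∈ I, B₁ ≠ B₂ → ¬ BarriersConflict H B₁ B₂ := by
      intro B₁ hB₁ B₂ hB₂ hne hc
      rcases hc with hint | hmm | hmm
      · exact hdisj B₁ hB₁ B₂ hB₂ hne hint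
      · exact hmmc B₁ hB₁ B₂ hB₂ hne hmm
      · exact hmmc B₂ hB₂ B₁ hB₁ hne.symm hmm
    have hIcover : IsCoverSet H I := ⟨fun B hB => ⟨hB.2, hbarH B hB⟩, hnc, hIpart⟩
    have hfilleq : fillGraph H I = G := by
      ext u v
      rw [fillGraph_adj]
      constructor
      · rintro (h | ⟨hne, B, hB, hu, hv⟩)
        · exact hle h
        · exact ((hJfree u v).mpr ⟨hne, B, hB.1, hu, hv⟩).1
      · intro hadj
        by_cases hext : IsExtendableEdge G u v
        · obtain ⟨M, hM, hMadj⟩ := hext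
          exact Or.inl (hall M hM u v hMadj)
        · obtain ⟨hne, B, hBJ, hu, hv⟩ := (hJfree u v).mp ⟨hadj, hext⟩
          exact Or.inr ⟨hne, B, ⟨hBJ, ⟨u, hu⟩⟩, hu, hv⟩
    exact ⟨I, hIcover, hfilleq⟩
end

section
/- Let H be a bipartite 1-extendable graph with bipartition classes X₁ and X₂, and for i = 1, 2 let G_i be the graph obtained from H by adding all possible edges between pairs of vertices of X_i. Then G₁ and G₂ are the only two elements of ℰ(H) with the maximum number of edges, and each has exactly C(n(H)/2, 2) free edges, where n(H) is the number of vertices of H. -/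
open SimpleGraph

variable {V : Type}

set_option linter.unusedSectionVars false

namespace BipMaxAux

open Set
open scoped Classical

/-- A perfect matching presented as an involution without fixed points along edges. -/
def PMFun (G : SimpleGraph V) (f : V → V) : Prop :=
  Function.Involutive f ∧ ∀ v, G.Adj v (f v)

/-- A matching with support `A`, presented as an involution fixing everything outside `A`. -/
def MFun (G : SimpleGraph V) (A : Set V) (f : V → V) : Prop :=
  Function.Involutive f ∧ (∀ v ∈ A, G.Adj v (f v)) ∧ ∀ v ∉ A, f v = v

lemma PMFun.inj {G : SimpleGraph V} {f : V → V} (h : PMFun G f) : Function.Injective f :=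
  h.1.injective

lemma MFun.mapsTo {G : SimpleGraph V} {A : Set V} {f : V → V} (h : MFun G A f) :
    ∀ v ∈ A, f v ∈ A := by
  intro v hv
  by_contra hfv
  have h1 : f (f v) = f v := h.2.2 _ hfv
  rw [h.1 v] at h1
  exact (h.2.1 v hv).ne h1

lemma MFun.mono {G G' : SimpleGraph V} {A : Set V} {f : V → V} (h : MFun G A f)
    (hle : G ≤ G') : MFun G' A f :=
  ⟨h.1, fun v hv => hle (h.2.1 v hv), h.2.2⟩

/-- The subgraph associated to a perfect-matching involution. -/
def pmSub (G : SimpleGraph V) (f : V → V) (h : PMFun G f) : G.Subgraph where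
  verts := Set.univ
  Adj u v := f u = v ∧ u ≠ v
  adj_sub := by rintro u v ⟨rfl, _⟩; exact h.2 u
  edge_vert := by intro u v _; trivial
  symm := by
    constructor
    rintro u v ⟨rfl, hne⟩
    exact ⟨h.1 u, hne.symm⟩

lemma pmSub_isPerfectMatching (G : SimpleGraph V) (f : V → V) (h : PMFun G f) :
    (pmSub G f h).IsPerfectMatching := by
  rw [SimpleGraph.Subgraph.isPerfectMatching_iff]
  intro v
  refine ⟨f v, ⟨rfl, (h.2 v).ne⟩, ?_⟩
  rintro w ⟨rfl, _⟩
  rfl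

lemma pmSub_adj (G : SimpleGraph V) (f : V → V) (h : PMFun G f) (u v : V) :
    (pmSub G f h).Adj u v ↔ f u = v ∧ u ≠ v := Iff.rfl

/-- From a perfect matching subgraph, extract the partner involution. -/
lemma exists_pmFun {G : SimpleGraph V} {M : G.Subgraph} (hM : M.IsPerfectMatching) :
    ∃ f : V → V, PMFun G f ∧ ∀ u v, M.Adj u v → f u = v := by
  have h := SimpleGraph.Subgraph.isPerfectMatching_iff.mp hM
  choose f hf huniq using h
  have huniq' : ∀ u v, M.Adj u v → f u = v := fun u v hv => (huniq u v hv).symm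
  refine ⟨f, ⟨fun v => huniq' _ _ ((hf v).symm), fun v => M.adj_sub (hf v)⟩, huniq'⟩

lemma Subgraph.finite [Finite V] (G : SimpleGraph V) : Finite G.Subgraph := by
  have : Function.Injective (fun M : G.Subgraph => (M.verts, M.Adj)) := by
    intro M N h
    simp only [Prod.mk.injEq] at h
    ext
    · rw [show M.verts = N.verts from h.1]
    · rw [show M.Adj = N.Adj from h.2]
  exact Finite.of_injective _ this

/-- Transfer a perfect matching along a subgraph relation `H ≤ K`. -/
def liftPM {H K : SimpleGraph V} (hle : H ≤ K) (M : H.Subgraph) : K.Subgraph where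
  verts := M.verts
  Adj := M.Adj
  adj_sub h := hle (M.adj_sub h)
  edge_vert := M.edge_vert
  symm := M.symm

lemma liftPM_isPM {H K : SimpleGraph V} (hle : H ≤ K) {M : H.Subgraph}
    (hM : M.IsPerfectMatching) : (liftPM hle M).IsPerfectMatching := hM

lemma liftPM_inj {H K : SimpleGraph V} (hle : H ≤ K) : Function.Injective (liftPM hle) := by
  intro M N h
  have h1 := congrArg SimpleGraph.Subgraph.verts h
  have h2 := congrArg SimpleGraph.Subgraph.Adj h
  ext
  · exact h1 ▸ Iff.rfl
  · exact h2 ▸ Iff.rfl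

/-- Key consequence of membership in `ℰ(H)`: every perfect matching (as involution)
of `K` uses only `H`-edges. -/
lemma pm_adj_of_elem [Finite V] {H K : SimpleGraph V} (hle : H ≤ K)
    (hcard : Nat.card {M : K.Subgraph // M.IsPerfectMatching} =
      Nat.card {M : H.Subgraph // M.IsPerfectMatching})
    {f : V → V} (hf : PMFun K f) : ∀ v, H.Adj v (f v) := by
  classical
  have : Finite H.Subgraph := Subgraph.finite H
  have : Finite K.Subgraph := Subgraph.finite K
  set Φ : {M : H.Subgraph // M.IsPerfectMatching} → {M : K.Subgraph // M.IsPerfectMatching} :=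
    fun M => ⟨liftPM hle M.1, liftPM_isPM hle M.2⟩ with hΦ
  have hinj : Function.Injective Φ := by
    intro M N h
    exact Subtype.ext (liftPM_inj hle (congrArg Subtype.val h))
  have hsurj : Function.Surjective Φ := by
    letI := Fintype.ofFinite {M : H.Subgraph // M.IsPerfectMatching}
    letI := Fintype.ofFinite {M : K.Subgraph // M.IsPerfectMatching}
    have hcards : Fintype.card {M : H.Subgraph // M.IsPerfectMatching} =
        Fintype.card {M : K.Subgraph // M.IsPerfectMatching} := by
      rw [← Nat.card_eq_fintype_card, ← Nat.card_eq_fintype_card, hcard]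
    exact ((Fintype.bijective_iff_injective_and_card Φ).mpr ⟨hinj, hcards⟩).surjective
  -- now use surjectivity on the perfect matching coming from `f`
  obtain ⟨⟨M, hM⟩, hMeq⟩ := hsurj ⟨pmSub K f hf, pmSub_isPerfectMatching K f hf⟩
  intro v
  have hadj : (liftPM hle M).Adj v (f v) := by
    have : (liftPM hle M) = pmSub K f hf := congrArg Subtype.val hMeq
    rw [this, pmSub_adj]
    exact ⟨rfl, (hf.2 v).ne⟩
  exact M.adj_sub hadj


/-! ### Bipartite side bookkeeping -/

section Bip

variable {H : SimpleGraph V} {X Y : Set V}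

/-- Neighborhood of a set. -/
def NS (H : SimpleGraph V) (S : Set V) : Set V := {y | ∃ x ∈ S, H.Adj x y}

lemma NS_mono {S T : Set V} (h : S ⊆ T) : NS H S ⊆ NS H T := by
  rintro y ⟨x, hx, hadj⟩; exact ⟨x, h hx, hadj⟩

lemma NS_union (S T : Set V) : NS H (S ∪ T) = NS H S ∪ NS H T := by
  ext y
  constructor
  · rintro ⟨x, hx | hx, hadj⟩
    · exact Or.inl ⟨x, hx, hadj⟩
    · exact Or.inr ⟨x, hx, hadj⟩
  · rintro (⟨x, hx, hadj⟩ | ⟨x, hx, hadj⟩)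
    · exact ⟨x, Or.inl hx, hadj⟩
    · exact ⟨x, Or.inr hx, hadj⟩

lemma NS_inter_subset (S T : Set V) : NS H (S ∩ T) ⊆ NS H S ∩ NS H T :=
  subset_inter (NS_mono inter_subset_left) (NS_mono inter_subset_right)

variable (hd : X ∩ Y = ∅) (hu : X ∪ Y = Set.univ)
  (hb : ∀ u v : V, H.Adj u v → (u ∈ X ∧ v ∈ Y) ∨ (u ∈ Y ∧ v ∈ X))

section
include hd hb

lemma side_of_adj {u v : V} (h : H.Adj u v) (hX : u ∈ X) : v ∈ Y := by
  rcases hb u v h with ⟨_, h2⟩ | ⟨h1, _⟩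
  · exact h2
  · exact absurd (Set.mem_inter hX h1) (by rw [hd]; exact Set.notMem_empty u)

lemma not_mem_of_memX {u : V} (hX : u ∈ X) : u ∉ Y := fun hY =>
  absurd (Set.mem_inter hX hY) (by rw [hd]; exact Set.notMem_empty u)

lemma NS_subset_Y {S : Set V} (hS : S ⊆ X) : NS H S ⊆ Y := by
  rintro y ⟨x, hx, hadj⟩
  exact side_of_adj hd hb hadj (hS hx)

lemma pmFun_mapsTo {f : V → V} (hf : PMFun H f) {v : V} (hv : v ∈ X) : f v ∈ Y :=
  side_of_adj hd hb (hf.2 v) hv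

end

section
include hd hu hb

/-- The two sides of a bipartite graph with a perfect matching have equal size. -/
lemma sides_ncard [Finite V] {f : V → V} (hf : PMFun H f) : X.ncard = Y.ncard := by
  have h1 : f '' X ⊆ Y := by
    rintro y ⟨x, hx, rfl⟩; exact pmFun_mapsTo hd hb hf hx
  have h2 : f '' Y ⊆ X := by
    rintro x ⟨y, hy, rfl⟩
    rcases hb y (f y) (hf.2 y) with ⟨h1', _⟩ | ⟨_, h2'⟩
    · exact absurd (Set.mem_inter h1' hy) (by rw [hd]; exact Set.notMem_empty y)
    · exact h2'
  have e1 : X.ncard ≤ Y.ncard := by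
    rw [← Set.ncard_image_of_injective X hf.inj]
    exact Set.ncard_le_ncard h1 (Set.toFinite _)
  have e2 : Y.ncard ≤ X.ncard := by
    rw [← Set.ncard_image_of_injective Y hf.inj]
    exact Set.ncard_le_ncard h2 (Set.toFinite _)
  omega

lemma card_V_eq [Finite V] : Nat.card V = X.ncard + Y.ncard := by
  rw [← Set.ncard_univ, ← hu]
  exact Set.ncard_union_eq (Set.disjoint_iff_inter_eq_empty.mpr hd)
    (Set.toFinite _) (Set.toFinite _)

end

/-- Every walk from inside `D` to outside `D` crosses the boundary. -/
lemma exists_boundary_edge {G : SimpleGraph V} {D : Set V} :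
    ∀ {a b : V}, G.Walk a b → a ∈ D → b ∉ D → ∃ u v, G.Adj u v ∧ u ∈ D ∧ v ∉ D := by
  intro a b w
  induction w with
  | nil => intro ha hb; exact absurd ha hb
  | cons h p ih =>
    intro ha hb
    rename_i x y z
    by_cases hm : y ∈ D
    · exact ih hm hb
    · exact ⟨x, y, h, ha, hm⟩

section
include hd hu hb

/-- Strict Hall condition for 1-extendable bipartite graphs. -/
lemma strict_hall [Finite V] (hH : OneExtendable H) {S : Set V} (hS : S ⊆ X)
    (hne : S.Nonempty) (hproper : S ≠ X) : S.ncard + 1 ≤ (NS H S).ncard := by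
  obtain ⟨M₀, hM₀⟩ := hH.2.1
  obtain ⟨f₀, hf₀, -⟩ := exists_pmFun hM₀
  -- basic inequality for any perfect matching involution
  have key : ∀ f : V → V, PMFun H f → f '' S ⊆ NS H S := by
    rintro f hf y ⟨x, hx, rfl⟩
    exact ⟨x, hx, hf.2 x⟩
  have hle : S.ncard ≤ (NS H S).ncard := by
    rw [← Set.ncard_image_of_injective S hf₀.inj]
    exact Set.ncard_le_ncard (key f₀ hf₀) (Set.toFinite _)
  by_contra hcon
  have hcard : (NS H S).ncard = S.ncard := by omega
  -- every perfect matching matches S exactly onto NS H S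
  have himg : ∀ f : V → V, PMFun H f → f '' S = NS H S := by
    intro f hf
    refine Set.eq_of_subset_of_ncard_le (key f hf) ?_ (Set.toFinite _)
    rw [Set.ncard_image_of_injective S hf.inj, hcard]
  -- find a boundary edge of D = S ∪ NS H S
  obtain ⟨s₀, hs₀⟩ := hne
  have hXS : (X \ S).Nonempty := by
    rcases Set.exists_of_ssubset (hS.ssubset_of_ne hproper) with ⟨t, ht, hts⟩
    exact ⟨t, ht, hts⟩
  obtain ⟨t₀, ht₀X, ht₀S⟩ := hXS
  have ht₀D : t₀ ∉ S ∪ NS H S := by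
    rintro (h | h)
    · exact ht₀S h
    · exact not_mem_of_memX hd hb ht₀X (NS_subset_Y hd hb hS h)
  obtain ⟨u, v, hadj, huD, hvD⟩ :=
    exists_boundary_edge ((hH.1.preconnected s₀ t₀).some) (Or.inl hs₀) ht₀D
  -- u must be in NS H S, and v in X \ S
  have huNS : u ∈ NS H S := by
    rcases huD with h | h
    · exact absurd (Or.inr ⟨u, h, hadj⟩) hvD
    · exact h
  have huY : u ∈ Y := NS_subset_Y hd hb hS huNS
  have hvX : v ∈ X := by
    rcases hb u v hadj with ⟨h1, _⟩ | ⟨_, h2⟩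
    · exact absurd (Set.mem_inter h1 huY) (by rw [hd]; exact Set.notMem_empty u)
    · exact h2
  have hvS : v ∉ S := fun h => hvD (Or.inl h)
  -- the edge uv is extendable; get a perfect matching containing it
  obtain ⟨M, hM, hMadj⟩ := hH.2.2 hadj
  obtain ⟨f, hf, huniq⟩ := exists_pmFun hM
  have hfu : f u = v := huniq u v hMadj
  -- but u ∈ NS H S = f '' S, so f u ∈ S; contradiction
  have : u ∈ f '' S := (himg f hf) ▸ huNS
  obtain ⟨x, hxS, hxu⟩ := this
  have : f u = x := by rw [← hxu, hf.1]
  rw [hfu] at this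
  exact hvS (this ▸ hxS)

end


section
include hd

/-- Hall's theorem: a perfect matching between `P ⊆ X` and `Q ⊆ Y` exists under
the Hall condition. -/
lemma hall_matching [Finite V] {P Q : Set V} (hP : P ⊆ X) (hQ : Q ⊆ Y)
    (hcard : P.ncard = Q.ncard)
    (hhall : ∀ S ⊆ P, S.ncard ≤ (NS H S ∩ Q).ncard) :
    ∃ f, MFun H (P ∪ Q) f ∧ ∀ v ∈ P, f v ∈ Q := by
  classical
  letI := Fintype.ofFinite V
  have hPQ : ∀ v, v ∈ P → v ∉ Q := fun v hvP hvQ =>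
    absurd (Set.mem_inter (hP hvP) (hQ hvQ)) (by rw [hd]; exact Set.notMem_empty v)
  set t : ↥P → Finset V := fun p => Set.Finite.toFinset (Set.toFinite {y | y ∈ Q ∧ H.Adj ↑p y})
    with ht
  have hhall' : ∀ s : Finset ↥P, s.card ≤ (s.biUnion t).card := by
    intro s
    set S : Set V := Subtype.val '' (↑s : Set ↥P) with hS
    have hSP : S ⊆ P := by rintro _ ⟨p, _, rfl⟩; exact p.2
    have hcS : S.ncard = s.card := by
      rw [hS, Set.ncard_image_of_injective _ Subtype.val_injective, Set.ncard_coe_finset]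
    have hset : ((s.biUnion t : Finset V) : Set V) = NS H S ∩ Q := by
      ext y
      simp only [Finset.coe_biUnion, Finset.mem_coe, Set.mem_iUnion, Set.Finite.coe_toFinset,
        Set.mem_setOf_eq, ht, Set.mem_inter_iff]
      constructor
      · rintro ⟨p, hps, hyQ, hadj⟩
        exact ⟨⟨↑p, ⟨p, hps, rfl⟩, hadj⟩, hyQ⟩
      · rintro ⟨⟨x, ⟨p, hps, rfl⟩, hadj⟩, hyQ⟩
        exact ⟨p, hps, hyQ, hadj⟩
    have := hhall S hSP
    rw [hcS] at this
    calc s.card ≤ (NS H S ∩ Q).ncard := this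
      _ = (s.biUnion t).card := by rw [← hset, Set.ncard_coe_finset]
  obtain ⟨f₀, hf₀inj, hf₀t⟩ := (Finset.all_card_le_biUnion_card_iff_exists_injective t).mp hhall'
  have hf₀Q : ∀ p, f₀ p ∈ Q ∧ H.Adj ↑p (f₀ p) := by
    intro p
    have := hf₀t p
    rw [ht, Set.Finite.mem_toFinset] at this
    exact this
  have hrange : Set.range f₀ = Q := by
    refine Set.eq_of_subset_of_ncard_le ?_ ?_ (Set.toFinite _)
    · rintro _ ⟨p, rfl⟩; exact (hf₀Q p).1
    · rw [← Set.image_univ, Set.ncard_image_of_injective _ hf₀inj, Set.ncard_univ,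
        Nat.card_coe_set_eq, ← hcard]
  have hsurj : ∀ y, y ∈ Q → ∃ p : ↥P, f₀ p = y := by
    intro y hy
    rw [← hrange] at hy
    exact hy
  choose g hg using hsurj
  refine ⟨fun v => if h : v ∈ P then f₀ ⟨v, h⟩ else if h' : v ∈ Q then ↑(g v h') else v,
    ⟨?_, ?_, ?_⟩, ?_⟩
  · -- involutive
    intro v
    by_cases h : v ∈ P
    · simp only [h, dif_pos]
      have hyQ : f₀ ⟨v, h⟩ ∈ Q := (hf₀Q ⟨v, h⟩).1
      have hyP : f₀ ⟨v, h⟩ ∉ P := fun hc => hPQ _ hc hyQ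
      simp only [hyP, dif_neg, hyQ, dif_pos, not_false_iff]
      have := hf₀inj (hg (f₀ ⟨v, h⟩) hyQ)
      rw [this]
    · simp only [h, dif_neg, not_false_iff]
      by_cases h' : v ∈ Q
      · simp only [h', dif_pos]
        have hgP : (↑(g v h') : V) ∈ P := (g v h').2
        simp only [hgP, dif_pos]
        rw [Subtype.coe_eta]
        exact hg v h'
      · simp only [h', dif_neg, not_false_iff, h, dif_neg]
  · -- adjacency on the support
    intro v hv
    rcases hv with hvP | hvQ
    · simp only [hvP, dif_pos]
      exact (hf₀Q ⟨v, hvP⟩).2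
    · by_cases h : v ∈ P
      · simp only [h, dif_pos]
        exact (hf₀Q ⟨v, h⟩).2
      · simp only [h, dif_neg, not_false_iff, hvQ, dif_pos]
        have := (hf₀Q (g v hvQ)).2
        rw [hg v hvQ] at this
        exact this.symm
  · -- identity off the support
    intro v hv
    rw [Set.mem_union] at hv
    push_neg at hv
    simp only [hv.1, dif_neg, not_false_iff, hv.2, dif_neg]
  · -- maps P into Q
    intro v hv
    simp only [hv, dif_pos]
    exact (hf₀Q ⟨v, hv⟩).1

/-- Defect version of Hall's theorem. -/
lemma hall_defect [Finite V] {P Q : Set V} (hP : P ⊆ X) (hQ : Q ⊆ Y)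
    (hcard : P.ncard = Q.ncard)
    (hnone : ¬ ∃ f, MFun H (P ∪ Q) f) :
    ∃ S ⊆ P, S.Nonempty ∧ (NS H S ∩ Q).ncard < S.ncard := by
  by_contra hcon
  push_neg at hcon
  have hhall : ∀ S ⊆ P, S.ncard ≤ (NS H S ∩ Q).ncard := by
    intro S hS
    rcases S.eq_empty_or_nonempty with rfl | hne
    · simp
    · exact hcon S hS hne
  obtain ⟨f, hf, -⟩ := hall_matching hd hP hQ hcard hhall
  exact hnone ⟨f, hf⟩

end

end Bip


/-! ### Surgery on matchings -/

/-- Restricting a perfect matching away from the pairs of `c` and `d`. -/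
lemma pmfun_restrict {K : SimpleGraph V} {f : V → V} (hf : PMFun K f) (c d : V) :
    MFun K (({c, d, f c, f d} : Set V)ᶜ)
      (fun v => if v = c ∨ v = d ∨ v = f c ∨ v = f d then v else f v) := by
  have hmem : ∀ v, v ∉ ({c, d, f c, f d} : Set V) → f v ∉ ({c, d, f c, f d} : Set V) := by
    intro v hv hfv
    apply hv
    simp only [Set.mem_insert_iff, Set.mem_singleton_iff] at hfv ⊢
    rcases hfv with h | h | h | h
    · right; right; left; rw [← h, hf.1]
    · right; right; right; rw [← h, hf.1]
    · left; exact hf.inj h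
    · right; left; exact hf.inj h
  have hsetiff : ∀ v, v ∈ ({c, d, f c, f d} : Set V) ↔ (v = c ∨ v = d ∨ v = f c ∨ v = f d) := by
    intro v
    simp [Set.mem_insert_iff, Set.mem_singleton_iff]
  refine ⟨?_, ?_, ?_⟩
  · intro v
    by_cases h : v = c ∨ v = d ∨ v = f c ∨ v = f d
    · simp only [h, if_pos]
    · simp only [h, if_neg, not_false_iff]
      have h2 : ¬ (f v = c ∨ f v = d ∨ f v = f c ∨ f v = f d) := by
        rw [← hsetiff]
        exact hmem v (by rw [hsetiff]; exact h)
      simp only [h2, if_neg, not_false_iff]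
      exact hf.1 v
  · intro v hv
    rw [Set.mem_compl_iff, hsetiff] at hv
    simp only [hv, if_neg, not_false_iff]
    exact hf.2 v
  · intro v hv
    rw [Set.notMem_compl_iff] at hv
    rw [hsetiff] at hv
    simp only [hv, if_pos]

/-- Extend a matching missing exactly `{u, v}` by the edge `uv`. -/
lemma pm_of_one {K : SimpleGraph V} {f : V → V} {u v : V}
    (hf : MFun K (({u, v} : Set V)ᶜ) f) (huv : K.Adj u v) :
    ∃ g, PMFun K g ∧ g u = v := by
  have hne : u ≠ v := huv.ne
  refine ⟨fun w => if w = u then v else if w = v then u else f w, ⟨?_, ?_⟩, by simp⟩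
  · intro w
    by_cases h1 : w = u
    · simp [h1, hne, hne.symm]
    · by_cases h2 : w = v
      · simp [h2, hne, hne.symm]
      · simp only [h1, if_neg, h2, not_false_iff]
        have hw : w ∈ ({u, v} : Set V)ᶜ := by
          simp only [Set.mem_compl_iff, Set.mem_insert_iff, Set.mem_singleton_iff]
          tauto
        have hfw := hf.mapsTo w hw
        simp only [Set.mem_compl_iff, Set.mem_insert_iff, Set.mem_singleton_iff] at hfw
        push_neg at hfw
        simp only [hfw.1, if_neg, hfw.2, not_false_iff]
        exact hf.1 w
  · intro w
    by_cases h1 : w = u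
    · simpa [h1, hne, hne.symm] using huv
    · by_cases h2 : w = v
      · simpa [h2, hne, hne.symm] using huv.symm
      · simp only [h1, if_neg, h2, not_false_iff]
        refine hf.2.1 w ?_
        simp only [Set.mem_compl_iff, Set.mem_insert_iff, Set.mem_singleton_iff]
        tauto

/-- Extend a matching missing exactly `{a, b, c, d}` by the edges `ab` and `cd`. -/
lemma pm_of_two {K : SimpleGraph V} {f : V → V} {a b c d : V}
    (hf : MFun K (({a, b, c, d} : Set V)ᶜ) f) (hab : K.Adj a b) (hcd : K.Adj c d)
    (hac : a ≠ c) (had : a ≠ d) (hbc : b ≠ c) (hbd : b ≠ d) :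
    ∃ g, PMFun K g ∧ g a = b := by
  have hne1 : a ≠ b := hab.ne
  have hne2 : c ≠ d := hcd.ne
  refine ⟨fun w => if w = a then b else if w = b then a else if w = c then d
    else if w = d then c else f w, ⟨?_, ?_⟩, by simp⟩
  · intro w
    by_cases h1 : w = a
    · simp [h1, hne1, hne1.symm, hne2, hne2.symm, hac, hac.symm, had, had.symm, hbc, hbc.symm, hbd, hbd.symm]
    · by_cases h2 : w = b
      · simp [h2, hne1, hne1.symm, hne2, hne2.symm, hac, hac.symm, had, had.symm, hbc, hbc.symm, hbd, hbd.symm]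
      · by_cases h3 : w = c
        · simp [h3, hne1, hne1.symm, hne2, hne2.symm, hac, hac.symm, had, had.symm, hbc, hbc.symm, hbd, hbd.symm]
        · by_cases h4 : w = d
          · simp [h4, hne1, hne1.symm, hne2, hne2.symm, hac, hac.symm, had, had.symm, hbc, hbc.symm, hbd, hbd.symm]
          · simp only [h1, if_neg, h2, h3, h4, not_false_iff]
            have hw : w ∈ ({a, b, c, d} : Set V)ᶜ := by
              simp only [Set.mem_compl_iff, Set.mem_insert_iff, Set.mem_singleton_iff]
              tauto
            have hfw := hf.mapsTo w hw
            simp only [Set.mem_compl_iff, Set.mem_insert_iff, Set.mem_singleton_iff] at hfw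
            push_neg at hfw
            simp only [hfw.1, hfw.2.1, hfw.2.2.1, hfw.2.2.2, if_neg, not_false_iff]
            exact hf.1 w
  · intro w
    by_cases h1 : w = a
    · simpa [h1, hne1, hne1.symm, hne2, hne2.symm, hac, hac.symm, had, had.symm, hbc, hbc.symm, hbd, hbd.symm] using hab
    · by_cases h2 : w = b
      · simpa [h2, hne1, hne1.symm, hne2, hne2.symm, hac, hac.symm, had, had.symm, hbc, hbc.symm, hbd, hbd.symm] using hab.symm
      · by_cases h3 : w = c
        · simpa [h3, hne1, hne1.symm, hne2, hne2.symm, hac, hac.symm, had, had.symm, hbc, hbc.symm, hbd, hbd.symm] using hcd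
        · by_cases h4 : w = d
          · simpa [h4, hne1, hne1.symm, hne2, hne2.symm, hac, hac.symm, had, had.symm, hbc, hbc.symm, hbd, hbd.symm] using hcd.symm
          · simp only [h1, if_neg, h2, h3, h4, not_false_iff]
            refine hf.2.1 w ?_
            simp only [Set.mem_compl_iff, Set.mem_insert_iff, Set.mem_singleton_iff]
            tauto



/-! ### Cross edges cannot be added -/

section Cross

variable {H K : SimpleGraph V} {X Y : Set V}
variable (hd : X ∩ Y = ∅) (hu : X ∪ Y = Set.univ)
  (hb : ∀ u v : V, H.Adj u v → (u ∈ X ∧ v ∈ Y) ∨ (u ∈ Y ∧ v ∈ X))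

include hd hu hb

lemma no_new_cross [Finite V] (hH : OneExtendable H) (hle : H ≤ K) (hnum : numPM K = numPM H)
    {u v : V} (huX : u ∈ X) (hvY : v ∈ Y) (hadj : K.Adj u v) : H.Adj u v := by
  by_contra hno
  obtain ⟨M₀, hM₀⟩ := hH.2.1
  obtain ⟨f₀, hf₀, -⟩ := exists_pmFun hM₀
  have hq : X.ncard = Y.ncard := sides_ncard hd hu hb hf₀
  have hXne : X.Nonempty := ⟨u, huX⟩
  have hP : X \ {u} ⊆ X := Set.diff_subset
  have hQ : Y \ {v} ⊆ Y := Set.diff_subset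
  have hcard : (X \ {u}).ncard = (Y \ {v}).ncard := by
    rw [Set.ncard_diff_singleton_of_mem huX, Set.ncard_diff_singleton_of_mem hvY, hq]
  have hhall : ∀ S ⊆ X \ {u}, S.ncard ≤ (NS H S ∩ (Y \ {v})).ncard := by
    intro S hS
    rcases S.eq_empty_or_nonempty with rfl | hne
    · simp
    have hSX : S ⊆ X := hS.trans Set.diff_subset
    have hSp : S ≠ X := by
      intro h
      exact (hS (h ▸ huX)).2 rfl
    have h1 : S.ncard + 1 ≤ (NS H S).ncard := strict_hall hd hu hb hH hSX hne hSp
    have h2 : NS H S ∩ (Y \ {v}) = NS H S \ {v} := by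
      ext y
      constructor
      · rintro ⟨h, -, hv2⟩; exact ⟨h, hv2⟩
      · rintro ⟨h, hv2⟩; exact ⟨h, NS_subset_Y hd hb hSX h, hv2⟩
    have h3 : (NS H S).ncard ≤ (NS H S \ {v}).ncard + 1 := by
      have hsub : NS H S ⊆ (NS H S \ {v}) ∪ {v} := by
        intro y hy
        by_cases h : y = v
        · exact Or.inr h
        · exact Or.inl ⟨hy, h⟩
      calc (NS H S).ncard ≤ ((NS H S \ {v}) ∪ {v}).ncard :=
            Set.ncard_le_ncard hsub (Set.toFinite _)
        _ ≤ (NS H S \ {v}).ncard + ({v} : Set V).ncard := Set.ncard_union_le _ _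
        _ = (NS H S \ {v}).ncard + 1 := by rw [Set.ncard_singleton]
    rw [h2]
    omega
  obtain ⟨f, hf, -⟩ := hall_matching hd hP hQ hcard hhall
  have huv : u ≠ v := fun h => absurd (Set.mem_inter huX (h ▸ hvY))
    (by rw [hd]; exact Set.notMem_empty u)
  have hsupp : (X \ {u}) ∪ (Y \ {v}) = (({u, v} : Set V)ᶜ) := by
    ext w
    simp only [Set.mem_union, Set.mem_diff, Set.mem_singleton_iff, Set.mem_compl_iff,
      Set.mem_insert_iff]
    constructor
    · rintro (⟨hwX, hwu⟩ | ⟨hwY, hwv⟩)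
      · push_neg
        refine ⟨hwu, fun h => absurd (Set.mem_inter hwX (h ▸ hvY))
          (by rw [hd]; exact Set.notMem_empty w)⟩
      · push_neg
        refine ⟨fun h => absurd (Set.mem_inter (h ▸ huX) hwY)
          (by rw [hd]; exact Set.notMem_empty w), hwv⟩
    · intro hw
      push_neg at hw
      have : w ∈ X ∪ Y := by rw [hu]; trivial
      rcases this with hwX | hwY
      · exact Or.inl ⟨hwX, hw.1⟩
      · exact Or.inr ⟨hwY, hw.2⟩
  rw [hsupp] at hf
  obtain ⟨g, hg, hgu⟩ := pm_of_one (hf.mono hle) hadj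
  have := pm_adj_of_elem hle hnum hg u
  rw [hgu] at this
  exact hno this

end Cross

/-! ### Counting pairs inside a set -/

/-- The set of non-diagonal unordered pairs inside `X`. -/
def pairsIn (X : Set V) : Set (Sym2 V) := {e | ¬ e.IsDiag ∧ ∀ v ∈ e, v ∈ X}

lemma mem_pairsIn {X : Set V} {u v : V} :
    s(u, v) ∈ pairsIn X ↔ u ≠ v ∧ u ∈ X ∧ v ∈ X := by
  simp only [pairsIn, Set.mem_setOf_eq, Sym2.mk_isDiag_iff, Sym2.mem_iff]
  constructor
  · rintro ⟨h1, h2⟩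
    exact ⟨h1, h2 u (Or.inl rfl), h2 v (Or.inr rfl)⟩
  · rintro ⟨h1, h2, h3⟩
    refine ⟨h1, ?_⟩
    rintro w (rfl | rfl) <;> assumption

lemma card_pairsIn [Finite V] (X : Set V) : (pairsIn X).ncard = X.ncard.choose 2 := by
  classical
  letI := Fintype.ofFinite V
  have himg : pairsIn X = Sym2.map (Subtype.val : ↥X → V) '' {e : Sym2 ↥X | ¬ e.IsDiag} := by
    ext e
    induction e with
    | _ u v =>
      rw [mem_pairsIn]
      constructor
      · rintro ⟨h1, h2, h3⟩
        refine ⟨s(⟨u, h2⟩, ⟨v, h3⟩), ?_, by rw [Sym2.map_pair_eq]⟩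
        simp only [Set.mem_setOf_eq, Sym2.mk_isDiag_iff]
        intro hc
        exact h1 (congrArg Subtype.val hc)
      · rintro ⟨ep, hep, heq⟩
        induction ep with
        | _ p q =>
          rw [Sym2.map_pair_eq] at heq
          rw [Sym2.eq_iff] at heq
          simp only [Set.mem_setOf_eq, Sym2.mk_isDiag_iff] at hep
          have hpq : (p : V) ≠ (q : V) := fun hc => hep (Subtype.val_injective hc)
          rcases heq with ⟨h1, h2⟩ | ⟨h1, h2⟩
          · exact ⟨h1 ▸ h2 ▸ hpq, h1 ▸ p.2, h2 ▸ q.2⟩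
          · exact ⟨h2 ▸ h1 ▸ hpq.symm, h2 ▸ q.2, h1 ▸ p.2⟩
  rw [himg, Set.ncard_image_of_injective _ (Sym2.map.injective Subtype.val_injective)]
  rw [← Nat.card_coe_set_eq, Nat.card_eq_fintype_card]
  have : Fintype.card ↥{e : Sym2 ↥X | ¬ e.IsDiag} =
      Fintype.card {e : Sym2 ↥X // ¬ e.IsDiag} := Fintype.card_congr (Equiv.refl _)
  rw [this, Sym2.card_subtype_not_diag, ← Nat.card_coe_set_eq, Nat.card_eq_fintype_card]



/-! ### Filling a side -/

section Fill

variable {H K : SimpleGraph V} {X Y : Set V}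
variable (hd : X ∩ Y = ∅) (hu : X ∪ Y = Set.univ)
  (hb : ∀ u v : V, H.Adj u v → (u ∈ X ∧ v ∈ Y) ∨ (u ∈ Y ∧ v ∈ X))

lemma fillSide_adj {u v : V} :
    (fillSide H X).Adj u v ↔ H.Adj u v ∨ (u ≠ v ∧ u ∈ X ∧ v ∈ X) := by
  unfold fillSide
  rw [sup_adj, fromRel_adj]
  constructor
  · rintro (h | ⟨hne, ⟨h1, h2⟩ | ⟨h1, h2⟩⟩)
    · exact Or.inl h
    · exact Or.inr ⟨hne, h1, h2⟩
    · exact Or.inr ⟨hne, h2, h1⟩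
  · rintro (h | ⟨hne, h1, h2⟩)
    · exact Or.inl h
    · exact Or.inr ⟨hne, Or.inl ⟨h1, h2⟩⟩

include hd hb

lemma side_of_adj' {u v : V} (h : H.Adj u v) (hY : u ∈ Y) : v ∈ X := by
  rcases hb u v h with ⟨h1, _⟩ | ⟨_, h2⟩
  · exact absurd (Set.mem_inter h1 hY) (by rw [hd]; exact Set.notMem_empty u)
  · exact h2

lemma edgeSet_inter_pairsIn : H.edgeSet ∩ pairsIn X = ∅ := by
  ext e
  induction e with
  | _ u v =>
    simp only [Set.mem_inter_iff, mem_edgeSet, mem_pairsIn, Set.mem_empty_iff_false, iff_false]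
    rintro ⟨hadj, -, h1, h2⟩
    rcases hb u v hadj with ⟨-, hY⟩ | ⟨hY, -⟩
    · exact absurd (Set.mem_inter h2 hY) (by rw [hd]; exact Set.notMem_empty v)
    · exact absurd (Set.mem_inter h1 hY) (by rw [hd]; exact Set.notMem_empty u)

include hu

/-- Every perfect matching of `fillSide H X` only uses edges of `H`. -/
lemma fill_pm_adj [Finite V] (hH : ∃ M : H.Subgraph, M.IsPerfectMatching)
    {M : (fillSide H X).Subgraph} (hM : M.IsPerfectMatching) :
    ∀ u v, M.Adj u v → H.Adj u v := by
  obtain ⟨M₀, hM₀⟩ := hH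
  obtain ⟨f₀, hf₀, -⟩ := exists_pmFun hM₀
  have hq : X.ncard = Y.ncard := sides_ncard hd hu hb hf₀
  obtain ⟨f, hf, huniq⟩ := exists_pmFun hM
  have hYadj : ∀ y ∈ Y, H.Adj y (f y) := by
    intro y hy
    rcases fillSide_adj.mp (hf.2 y) with h | ⟨-, h1, -⟩
    · exact h
    · exact absurd (Set.mem_inter h1 hy) (by rw [hd]; exact Set.notMem_empty y)
  have himg : f '' Y = X := by
    refine Set.eq_of_subset_of_ncard_le ?_ ?_ (Set.toFinite _)
    · rintro _ ⟨y, hy, rfl⟩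
      exact side_of_adj' hd hb (hYadj y hy) hy
    · rw [Set.ncard_image_of_injective _ hf.inj, hq]
  have hall : ∀ v, H.Adj v (f v) := by
    intro v
    have hv : v ∈ X ∪ Y := by rw [hu]; trivial
    rcases hv with hv | hv
    · rw [← himg] at hv
      obtain ⟨y, hy, rfl⟩ := hv
      have : f (f y) = y := hf.1 y
      rw [this]
      exact (hYadj y hy).symm
    · exact hYadj v hv
  intro u v huv
  have := huniq u v huv
  exact this ▸ hall u

lemma numPM_fillSide [Finite V] (hH : ∃ M : H.Subgraph, M.IsPerfectMatching) :
    numPM (fillSide H X) = numPM H := by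
  have hle : H ≤ fillSide H X := le_sup_left
  unfold numPM
  refine Nat.card_congr (Equiv.mk ?_ ?_ ?_ ?_)
  · rintro ⟨M, hM⟩
    refine ⟨⟨M.verts, M.Adj, fun h => fill_pm_adj hd hu hb hH hM _ _ h, M.edge_vert, M.symm⟩, hM⟩
  · rintro ⟨M, hM⟩
    exact ⟨liftPM hle M, liftPM_isPM hle hM⟩
  · rintro ⟨M, hM⟩
    apply Subtype.ext
    rfl
  · rintro ⟨M, hM⟩
    apply Subtype.ext
    rfl

/-- `fillSide` belongs to `ℰ(H)`. -/
lemma fillSide_mem [Finite V] (hH : ∃ M : H.Subgraph, M.IsPerfectMatching) :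
    fillSide H X ∈ elemSupergraphs H :=
  ⟨le_sup_left, numPM_fillSide hd hu hb hH⟩

omit hd hb hu in
/-- Edge set of `fillSide`. -/
lemma fillSide_edgeSet : (fillSide H X).edgeSet = H.edgeSet ∪ pairsIn X := by
  ext e
  induction e with
  | _ u v =>
    rw [mem_edgeSet, fillSide_adj, Set.mem_union, mem_edgeSet, mem_pairsIn]

omit hu in
lemma fillSide_edgeSet_ncard [Finite V] :
    (fillSide H X).edgeSet.ncard = H.edgeSet.ncard + X.ncard.choose 2 := by
  rw [fillSide_edgeSet, Set.ncard_union_eq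
    (Set.disjoint_iff_inter_eq_empty.mpr (edgeSet_inter_pairsIn hd hb))
    (Set.toFinite _) (Set.toFinite _), card_pairsIn]

end Fill


/-! ### Decomposition of a member of `ℰ(H)` and the counting bound -/

section Decomp

variable {H K : SimpleGraph V} {X Y : Set V}
variable (hd : X ∩ Y = ∅) (hu : X ∪ Y = Set.univ)
  (hb : ∀ u v : V, H.Adj u v → (u ∈ X ∧ v ∈ Y) ∨ (u ∈ Y ∧ v ∈ X))

include hd hu hb

lemma edge_decomp [Finite V] (hH : OneExtendable H) (hle : H ≤ K) (hnum : numPM K = numPM H) :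
    K.edgeSet = H.edgeSet ∪ ((K.edgeSet ∩ pairsIn X) ∪ (K.edgeSet ∩ pairsIn Y)) := by
  ext e
  induction e with
  | _ u v =>
    simp only [Set.mem_union, Set.mem_inter_iff, mem_edgeSet, mem_pairsIn]
    constructor
    · intro hK
      have hu' : u ∈ X ∪ Y := by rw [hu]; trivial
      have hv' : v ∈ X ∪ Y := by rw [hu]; trivial
      rcases hu' with huX | huY
      · rcases hv' with hvX | hvY
        · exact Or.inr (Or.inl ⟨hK, hK.ne, huX, hvX⟩)
        · exact Or.inl (no_new_cross hd hu hb hH hle hnum huX hvY hK)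
      · rcases hv' with hvX | hvY
        · exact Or.inl ((no_new_cross hd hu hb hH hle hnum hvX huY hK.symm).symm)
        · exact Or.inr (Or.inr ⟨hK, hK.ne, huY, hvY⟩)
    · rintro (h | ⟨h, -⟩ | ⟨h, -⟩)
      · exact hle h
      · exact h
      · exact h

omit hu in
lemma pairsIn_disj : pairsIn X ∩ pairsIn Y = (∅ : Set (Sym2 V)) := by
  ext e
  induction e with
  | _ u v =>
    simp only [Set.mem_inter_iff, mem_pairsIn, Set.mem_empty_iff_false, iff_false]
    rintro ⟨⟨-, h1, -⟩, ⟨-, h2, -⟩⟩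
    exact absurd (Set.mem_inter h1 h2) (by rw [hd]; exact Set.notMem_empty u)

lemma edge_decomp_ncard [Finite V] (hH : OneExtendable H) (hle : H ≤ K)
    (hnum : numPM K = numPM H) :
    K.edgeSet.ncard = H.edgeSet.ncard + ((K.edgeSet ∩ pairsIn X).ncard
      + (K.edgeSet ∩ pairsIn Y).ncard) := by
  have hKn : K.edgeSet.ncard
      = (H.edgeSet ∪ ((K.edgeSet ∩ pairsIn X) ∪ (K.edgeSet ∩ pairsIn Y))).ncard :=
    congrArg Set.ncard (edge_decomp hd hu hb hH hle hnum)
  rw [hKn]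
  rw [Set.ncard_union_eq ?d1 (Set.toFinite _) (Set.toFinite _),
    Set.ncard_union_eq ?d2 (Set.toFinite _) (Set.toFinite _)]
  case d2 =>
    refine Set.disjoint_iff_inter_eq_empty.mpr ?_
    have := pairsIn_disj (X := X) (Y := Y) hd hb
    rw [Set.eq_empty_iff_forall_notMem] at this ⊢
    rintro e ⟨⟨-, h1⟩, ⟨-, h2⟩⟩
    exact this e ⟨h1, h2⟩
  case d1 =>
    refine Set.disjoint_iff_inter_eq_empty.mpr ?_
    have h1 := edgeSet_inter_pairsIn (Y := Y) hd hb
    have h2 : H.edgeSet ∩ pairsIn Y = ∅ := by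
      ext e
      induction e with
      | _ u v =>
        simp only [Set.mem_inter_iff, mem_edgeSet, mem_pairsIn, Set.mem_empty_iff_false,
          iff_false]
        rintro ⟨hadj, -, hm1, hm2⟩
        rcases hb u v hadj with ⟨hX, -⟩ | ⟨-, hX⟩
        · exact absurd (Set.mem_inter hX hm1) (by rw [hd]; exact Set.notMem_empty u)
        · exact absurd (Set.mem_inter hX hm2) (by rw [hd]; exact Set.notMem_empty v)
    rw [Set.eq_empty_iff_forall_notMem] at h1 h2 ⊢
    rintro e ⟨he, (⟨hK1, hp⟩ | ⟨hK2, hp⟩)⟩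
    · exact h1 e ⟨he, hp⟩
    · exact h2 e ⟨he, hp⟩

omit hd hu hb in
/-- Involutivity of `Sym2.map f` for involutive `f`. -/
lemma sym2_map_invol {f : V → V} (hf : Function.Involutive f) (e : Sym2 V) :
    Sym2.map f (Sym2.map f e) = e := by
  rw [Sym2.map_map]
  have : f ∘ f = id := funext hf
  rw [this, Sym2.map_id, id_eq]

/-- The image of added `Y`-side pairs under a perfect matching of `H` consists of
`X`-side pairs that were not added. -/
lemma map_A2_subset [Finite V] (hle : H ≤ K) (hnum : numPM K = numPM H)
    {f : V → V} (hf : PMFun H f) :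
    Sym2.map f '' (K.edgeSet ∩ pairsIn Y) ⊆ pairsIn X \ (K.edgeSet ∩ pairsIn X) := by
  rintro e ⟨r, hr, rfl⟩
  revert hr
  induction r with
  | _ c d =>
    intro hr
    rw [Set.mem_inter_iff, mem_edgeSet, mem_pairsIn] at hr
    obtain ⟨hKcd, hne, hcY, hdY⟩ := hr
    rw [Sym2.map_pair_eq]
    have hfcX : f c ∈ X := side_of_adj' hd hb (hf.2 c) hcY
    have hfdX : f d ∈ X := side_of_adj' hd hb (hf.2 d) hdY
    constructor
    · rw [mem_pairsIn]
      exact ⟨fun h => hne (hf.inj h), hfcX, hfdX⟩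
    · rintro ⟨hK', -⟩
      rw [mem_edgeSet] at hK'
      have hfK : PMFun K f := ⟨hf.1, fun v => hle (hf.2 v)⟩
      have hrem := pmfun_restrict hfK c d
      have hcfc : c ≠ f c := fun h => absurd (Set.mem_inter (h.symm ▸ hfcX) hcY)
        (by rw [hd]; exact Set.notMem_empty c)
      have hcfd : c ≠ f d := fun h => absurd (Set.mem_inter (h.symm ▸ hfdX) hcY)
        (by rw [hd]; exact Set.notMem_empty c)
      have hdfc : d ≠ f c := fun h => absurd (Set.mem_inter (h.symm ▸ hfcX) hdY)
        (by rw [hd]; exact Set.notMem_empty d)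
      have hdfd : d ≠ f d := fun h => absurd (Set.mem_inter (h.symm ▸ hfdX) hdY)
        (by rw [hd]; exact Set.notMem_empty d)
      obtain ⟨g, hg, hgc⟩ := pm_of_two hrem hKcd hK' hcfc hcfd hdfc hdfd
      have := pm_adj_of_elem hle hnum hg c
      rw [hgc] at this
      rcases hb c d this with ⟨hX, -⟩ | ⟨-, hX⟩
      · exact absurd (Set.mem_inter hX hcY) (by rw [hd]; exact Set.notMem_empty c)
      · exact absurd (Set.mem_inter hX hdY) (by rw [hd]; exact Set.notMem_empty d)

/-- The counting bound: the number of added edges is at most `C(q, 2)`. -/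
lemma card_A_le [Finite V] (hle : H ≤ K) (hnum : numPM K = numPM H)
    {f : V → V} (hf : PMFun H f) :
    (K.edgeSet ∩ pairsIn X).ncard + (K.edgeSet ∩ pairsIn Y).ncard ≤ (pairsIn X).ncard := by
  have hsub := map_A2_subset hd hu hb hle hnum hf
  have hinj : Function.Injective (Sym2.map f) := Sym2.map.injective hf.inj
  have hcard : (Sym2.map f '' (K.edgeSet ∩ pairsIn Y)).ncard
      = (K.edgeSet ∩ pairsIn Y).ncard := Set.ncard_image_of_injective _ hinj
  have hdisj : Disjoint (K.edgeSet ∩ pairsIn X) (Sym2.map f '' (K.edgeSet ∩ pairsIn Y)) := by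
    rw [Set.disjoint_iff_inter_eq_empty, Set.eq_empty_iff_forall_notMem]
    rintro e ⟨h1, h2⟩
    exact (hsub h2).2 h1
  calc (K.edgeSet ∩ pairsIn X).ncard + (K.edgeSet ∩ pairsIn Y).ncard
      = ((K.edgeSet ∩ pairsIn X) ∪ Sym2.map f '' (K.edgeSet ∩ pairsIn Y)).ncard := by
        rw [Set.ncard_union_eq hdisj (Set.toFinite _) (Set.toFinite _), hcard]
    _ ≤ (pairsIn X).ncard := by
        refine Set.ncard_le_ncard ?_ (Set.toFinite _)
        rintro e (h | h)
        · exact h.2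
        · exact (hsub h).1

/-- The equality case: the complement of the added `X`-pairs is the matching-image of
the added `Y`-pairs. -/
lemma compl_mem_A2 [Finite V] (hle : H ≤ K) (hnum : numPM K = numPM H)
    (heq : (K.edgeSet ∩ pairsIn X).ncard + (K.edgeSet ∩ pairsIn Y).ncard
      = (pairsIn X).ncard)
    {f : V → V} (hf : PMFun H f) {e : Sym2 V} (he : e ∈ pairsIn X)
    (hne : e ∉ K.edgeSet ∩ pairsIn X) : Sym2.map f e ∈ K.edgeSet ∩ pairsIn Y := by
  have hsub := map_A2_subset hd hu hb hle hnum hf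
  have hinj : Function.Injective (Sym2.map f) := Sym2.map.injective hf.inj
  have hdisj : Disjoint (K.edgeSet ∩ pairsIn X) (Sym2.map f '' (K.edgeSet ∩ pairsIn Y)) := by
    rw [Set.disjoint_iff_inter_eq_empty, Set.eq_empty_iff_forall_notMem]
    rintro x ⟨h1, h2⟩
    exact (hsub h2).2 h1
  have hset : (K.edgeSet ∩ pairsIn X) ∪ Sym2.map f '' (K.edgeSet ∩ pairsIn Y) = pairsIn X := by
    refine Set.eq_of_subset_of_ncard_le ?_ ?_ (Set.toFinite _)
    · rintro x (h | h)
      · exact h.2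
      · exact (hsub h).1
    · rw [Set.ncard_union_eq hdisj (Set.toFinite _) (Set.toFinite _),
        Set.ncard_image_of_injective _ hinj, heq]
  have : e ∈ (K.edgeSet ∩ pairsIn X) ∪ Sym2.map f '' (K.edgeSet ∩ pairsIn Y) := by
    rw [hset]; exact he
  rcases this with h | ⟨r, hr, hre⟩
  · exact absurd h hne
  · rw [← hre, sym2_map_invol hf.1]
    exact hr

end Decomp


/-! ### Tight sets and the equality case -/

section Tight

variable {H K : SimpleGraph V} {X Y : Set V}
variable (hd : X ∩ Y = ∅) (hu : X ∪ Y = Set.univ)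
  (hb : ∀ u v : V, H.Adj u v → (u ∈ X ∧ v ∈ Y) ∨ (u ∈ Y ∧ v ∈ X))

/-- Tight subsets of `X` avoiding `a` and `b`. -/
def TightF (H : SimpleGraph V) (X : Set V) (a b : V) : Set (Set V) :=
  {S | S.Nonempty ∧ S ⊆ X \ {a, b} ∧ (NS H S).ncard = S.ncard + 1}

include hd hu hb

lemma tight_union [Finite V] (hH : OneExtendable H) {a b : V} (haX : a ∈ X)
    {A B : Set V} (hA : A ∈ TightF H X a b) (hB : B ∈ TightF H X a b)
    (hmeet : (A ∩ B).Nonempty) : A ∪ B ∈ TightF H X a b := by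
  obtain ⟨hAne, hAsub, hAt⟩ := hA
  obtain ⟨hBne, hBsub, hBt⟩ := hB
  have haA : a ∉ A := fun h => (hAsub h).2 (Or.inl rfl)
  have haB : a ∉ B := fun h => (hBsub h).2 (Or.inl rfl)
  have hsubX : ∀ {S : Set V}, S ⊆ X \ {a, b} → S ⊆ X := fun h => h.trans Set.diff_subset
  have hIne : A ∩ B ≠ X := fun h => haA (Set.inter_subset_left (h ▸ haX))
  have hUne : A ∪ B ≠ X := fun h => haA (by
    have : a ∈ A ∪ B := h ▸ haX
    rcases this with h' | h'
    · exact h'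
    · exact absurd h' haB)
  have hsh1 : (A ∩ B).ncard + 1 ≤ (NS H (A ∩ B)).ncard :=
    strict_hall hd hu hb hH ((Set.inter_subset_left).trans (hsubX hAsub)) hmeet hIne
  have hsh2 : (A ∪ B).ncard + 1 ≤ (NS H (A ∪ B)).ncard :=
    strict_hall hd hu hb hH (Set.union_subset (hsubX hAsub) (hsubX hBsub))
      (hAne.mono Set.subset_union_left) hUne
  have hNU : NS H (A ∪ B) = NS H A ∪ NS H B := NS_union A B
  have hNIle : (NS H (A ∩ B)).ncard ≤ (NS H A ∩ NS H B).ncard :=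
    Set.ncard_le_ncard (NS_inter_subset A B) (Set.toFinite _)
  have hsum1 : (A ∪ B).ncard + (A ∩ B).ncard = A.ncard + B.ncard :=
    Set.ncard_union_add_ncard_inter A B (Set.toFinite _) (Set.toFinite _)
  have hsum2 : (NS H A ∪ NS H B).ncard + (NS H A ∩ NS H B).ncard
      = (NS H A).ncard + (NS H B).ncard :=
    Set.ncard_union_add_ncard_inter _ _ (Set.toFinite _) (Set.toFinite _)
  refine ⟨hAne.mono Set.subset_union_left, Set.union_subset hAsub hBsub, ?_⟩
  rw [hNU]
  rw [hNU] at hsh2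
  omega

lemma exists_max_tight [Finite V] {a b : V} {S : Set V} (hS : S ∈ TightF H X a b) :
    ∃ M ∈ TightF H X a b, S ⊆ M ∧ ∀ T ∈ TightF H X a b, M ⊆ T → T = M := by
  have hfam : ({T ∈ TightF H X a b | S ⊆ T}).Finite := Set.toFinite _
  obtain ⟨M, hM, hmax⟩ := Set.Finite.exists_maximalFor Set.ncard _ hfam ⟨S, hS, le_refl _⟩
  refine ⟨M, hM.1, hM.2, ?_⟩
  intro T hT hMT
  have hTfam : T ∈ {T ∈ TightF H X a b | S ⊆ T} := ⟨hT, hM.2.trans hMT⟩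
  have := hmax (j := T) hTfam (Set.ncard_le_ncard hMT (Set.toFinite _))
  exact (Set.eq_of_subset_of_ncard_le hMT this (Set.toFinite _)).symm

omit hd hu hb in
/-- The unique "exit vertex" of a tight set with respect to a perfect matching. -/
lemma tight_exit [Finite V] {S : Set V} (htight : (NS H S).ncard = S.ncard + 1)
    {f : V → V} (hf : PMFun H f) : ∃ w, NS H S \ f '' S = {w} := by
  have himg : f '' S ⊆ NS H S := by
    rintro _ ⟨x, hx, rfl⟩
    exact ⟨x, hx, hf.2 x⟩
  rw [← Set.ncard_eq_one, Set.ncard_diff himg (Set.toFinite _),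
    Set.ncard_image_of_injective _ hf.inj, htight]
  omega

include hd hu hb

/-- The key step: in the equality case, if `ab` is an added edge inside `X` then so is
`ac` for every `c ∈ X`. -/
lemma dagger [Finite V] (hH : OneExtendable H) (hle : H ≤ K) (hnum : numPM K = numPM H)
    (heq : (K.edgeSet ∩ pairsIn X).ncard + (K.edgeSet ∩ pairsIn Y).ncard = (pairsIn X).ncard)
    {a b c : V} (hcX : c ∈ X)
    (hab : s(a, b) ∈ K.edgeSet ∩ pairsIn X) (hac : a ≠ c) :
    s(a, c) ∈ K.edgeSet ∩ pairsIn X := by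
  obtain ⟨habK', hpab⟩ := hab
  rw [mem_edgeSet] at habK'
  rw [mem_pairsIn] at hpab
  obtain ⟨habne, haX, hbX⟩ := hpab
  by_cases hcb : c = b
  · subst hcb
    exact ⟨(mem_edgeSet K).mpr habK', mem_pairsIn.mpr ⟨habne, haX, hbX⟩⟩
  by_contra hno
  have hπ : s(a, c) ∈ pairsIn X := mem_pairsIn.mpr ⟨hac, haX, hcX⟩
  -- for every perfect matching f of H, the pair (f a, f c) is an added Y-edge
  have hA2 : ∀ f : V → V, PMFun H f → s(f a, f c) ∈ K.edgeSet ∩ pairsIn Y := by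
    intro f hf
    have := compl_mem_A2 hd hu hb hle hnum heq hf hπ hno
    rwa [Sym2.map_pair_eq] at this
  -- basic membership facts
  have hmemY : ∀ (f : V → V), PMFun H f → f a ∈ Y ∧ f c ∈ Y := fun f hf =>
    ⟨pmFun_mapsTo hd hb hf haX, pmFun_mapsTo hd hb hf hcX⟩
  have hdisjmem : ∀ {x y : V}, x ∈ X → y ∈ Y → x ≠ y := fun {x y} hx hy h =>
    absurd (Set.mem_inter hx (h ▸ hy)) (by rw [hd]; exact Set.notMem_empty x)
  -- no H-matching avoiding a, b, f a, f c
  have hINC : ∀ f : V → V, PMFun H f →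
      ¬ ∃ m, MFun H ((X \ {a, b}) ∪ (Y \ {f a, f c})) m := by
    rintro f hf ⟨m, hm⟩
    obtain ⟨hfaY, hfcY⟩ := hmemY f hf
    have hsupp : (X \ {a, b}) ∪ (Y \ {f a, f c}) = (({a, b, f a, f c} : Set V)ᶜ) := by
      ext w
      simp only [Set.mem_union, Set.mem_diff, Set.mem_insert_iff, Set.mem_singleton_iff,
        Set.mem_compl_iff]
      constructor
      · rintro (⟨hwX, hw⟩ | ⟨hwY, hw⟩)
        · push_neg at hw
          push_neg
          exact ⟨hw.1, hw.2, (hdisjmem hwX hfaY), (hdisjmem hwX hfcY)⟩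
        · push_neg at hw
          push_neg
          exact ⟨fun h => (hdisjmem haX hwY) h.symm, fun h => (hdisjmem hbX hwY) h.symm,
            hw.1, hw.2⟩
      · intro hw
        push_neg at hw
        have : w ∈ X ∪ Y := by rw [hu]; trivial
        rcases this with hwX | hwY
        · exact Or.inl ⟨hwX, by push_neg; exact ⟨hw.1, hw.2.1⟩⟩
        · exact Or.inr ⟨hwY, by push_neg; exact ⟨hw.2.2.1, hw.2.2.2⟩⟩
    rw [hsupp] at hm
    have hA2K : K.Adj (f a) (f c) := (mem_edgeSet K).mp (hA2 f hf).1
    obtain ⟨g, hg, hga⟩ := pm_of_two (hm.mono hle) habK' hA2K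
      (hdisjmem haX hfaY) (hdisjmem haX hfcY) (hdisjmem hbX hfaY) (hdisjmem hbX hfcY)
    have := pm_adj_of_elem hle hnum hg a
    rw [hga] at this
    rcases hb a b this with ⟨-, hY⟩ | ⟨hY, -⟩
    · exact absurd (Set.mem_inter hbX hY) (by rw [hd]; exact Set.notMem_empty b)
    · exact absurd (Set.mem_inter haX hY) (by rw [hd]; exact Set.notMem_empty a)
  -- for each perfect matching f, we obtain a tight set avoiding a,b whose
  -- neighborhood contains f a and f c
  have htightf : ∀ f : V → V, PMFun H f →
      ∃ S ∈ TightF H X a b, f a ∈ NS H S ∧ f c ∈ NS H S := by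
    intro f hf
    obtain ⟨hfaY, hfcY⟩ := hmemY f hf
    have hfafc : f a ≠ f c := fun h => hac (hf.inj h)
    have hcards : (X \ {a, b}).ncard = (Y \ {f a, f c}).ncard := by
      rw [Set.ncard_diff (by rintro w (rfl | rfl); exacts [haX, hbX]) (Set.toFinite _),
        Set.ncard_diff (by rintro w (rfl | rfl); exacts [hfaY, hfcY]) (Set.toFinite _),
        Set.ncard_pair habne, Set.ncard_pair hfafc,
        sides_ncard hd hu hb hf]
    obtain ⟨S, hSsub, hSne, hSlt⟩ := hall_defect hd (Set.diff_subset) (Set.diff_subset)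
      hcards (hINC f hf)
    have hSX : S ⊆ X := hSsub.trans Set.diff_subset
    have hSp : S ≠ X := fun h => (hSsub (h ▸ haX)).2 (Or.inl rfl)
    have hsh : S.ncard + 1 ≤ (NS H S).ncard := strict_hall hd hu hb hH hSX hSne hSp
    have hQ : NS H S ∩ (Y \ {f a, f c}) = NS H S \ {f a, f c} := by
      ext y
      constructor
      · rintro ⟨h1, -, h2⟩; exact ⟨h1, h2⟩
      · rintro ⟨h1, h2⟩; exact ⟨h1, NS_subset_Y hd hb hSX h1, h2⟩
    rw [hQ] at hSlt
    have hdle : ∀ (T : Set V) (x y : V), T.ncard ≤ (T \ {x, y}).ncard + 2 := by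
      intro T x y
      have hsub : T ⊆ (T \ {x, y}) ∪ {x, y} := by
        intro w hw
        by_cases h : w ∈ ({x, y} : Set V)
        · exact Or.inr h
        · exact Or.inl ⟨hw, h⟩
      calc T.ncard ≤ ((T \ {x, y}) ∪ {x, y}).ncard := Set.ncard_le_ncard hsub (Set.toFinite _)
        _ ≤ (T \ {x, y}).ncard + ({x, y} : Set V).ncard := Set.ncard_union_le _ _
        _ ≤ (T \ {x, y}).ncard + 2 := by
            gcongr
            exact (Set.ncard_insert_le _ _).trans (by rw [Set.ncard_singleton])
    have hNle := hdle (NS H S) (f a) (f c)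
    have htight : (NS H S).ncard = S.ncard + 1 := by omega
    have hfa : f a ∈ NS H S := by
      by_contra hfa
      have : NS H S \ {f a, f c} = NS H S \ {f c} := by
        ext y
        simp only [Set.mem_diff, Set.mem_insert_iff, Set.mem_singleton_iff]
        constructor
        · rintro ⟨h1, h2⟩; push_neg at h2; exact ⟨h1, h2.2⟩
        · rintro ⟨h1, h2⟩
          refine ⟨h1, ?_⟩
          push_neg
          exact ⟨fun h => hfa (h ▸ h1), h2⟩
      rw [this] at hSlt
      have := hdle (NS H S) (f c) (f c)
      have hcc : (NS H S \ {f c, f c}) = NS H S \ {f c} := by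
        ext y; simp [Set.mem_diff]
      rw [hcc] at this
      have h1 : (NS H S).ncard ≤ (NS H S \ {f c}).ncard + 1 := by
        have hsub : NS H S ⊆ (NS H S \ {f c}) ∪ {f c} := by
          intro w hw
          by_cases h : w = f c
          · exact Or.inr h
          · exact Or.inl ⟨hw, h⟩
        calc (NS H S).ncard ≤ ((NS H S \ {f c}) ∪ {f c}).ncard :=
              Set.ncard_le_ncard hsub (Set.toFinite _)
          _ ≤ (NS H S \ {f c}).ncard + 1 := by
              refine (Set.ncard_union_le _ _).trans ?_
              rw [Set.ncard_singleton]
      omega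
    have hfc : f c ∈ NS H S := by
      by_contra hfc
      have : NS H S \ {f a, f c} = NS H S \ {f a} := by
        ext y
        simp only [Set.mem_diff, Set.mem_insert_iff, Set.mem_singleton_iff]
        constructor
        · rintro ⟨h1, h2⟩; push_neg at h2; exact ⟨h1, h2.1⟩
        · rintro ⟨h1, h2⟩
          refine ⟨h1, ?_⟩
          push_neg
          exact ⟨h2, fun h => hfc (h ▸ h1)⟩
      rw [this] at hSlt
      have h1 : (NS H S).ncard ≤ (NS H S \ {f a}).ncard + 1 := by
        have hsub : NS H S ⊆ (NS H S \ {f a}) ∪ {f a} := by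
          intro w hw
          by_cases h : w = f a
          · exact Or.inr h
          · exact Or.inl ⟨hw, h⟩
        calc (NS H S).ncard ≤ ((NS H S \ {f a}) ∪ {f a}).ncard :=
              Set.ncard_le_ncard hsub (Set.toFinite _)
          _ ≤ (NS H S \ {f a}).ncard + 1 := by
              refine (Set.ncard_union_le _ _).trans ?_
              rw [Set.ncard_singleton]
      omega
    exact ⟨S, ⟨hSne, hSsub, htight⟩, hfa, hfc⟩
  -- the maximal tight set containing a given one, with c inside it
  have hmaxtight : ∀ f : V → V, PMFun H f →
      ∃ M ∈ TightF H X a b, (c ∈ M ∧ NS H M \ f '' M = {f a}) ∧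
        ∀ T ∈ TightF H X a b, M ⊆ T → T = M := by
    intro f hf
    obtain ⟨S, hS, hfa, hfc⟩ := htightf f hf
    obtain ⟨M, hM, hSM, hmax⟩ := exists_max_tight hd hu hb hS
    have hfaM : f a ∈ NS H M := NS_mono hSM hfa
    have hfcM : f c ∈ NS H M := NS_mono hSM hfc
    obtain ⟨w, hw⟩ := tight_exit hM.2.2 hf
    have hfanotimg : f a ∉ f '' M := by
      rintro ⟨z, hz, hfz⟩
      have : z = a := hf.inj hfz
      exact (hM.2.1 (this ▸ hz)).2 (Or.inl rfl)
    have hfaw : f a = w := by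
      have : f a ∈ NS H M \ f '' M := ⟨hfaM, hfanotimg⟩
      rw [hw] at this
      exact this
    have hcM : c ∈ M := by
      have hfcimg : f c ∈ f '' M := by
        by_contra hfcimg
        have : f c ∈ NS H M \ f '' M := ⟨hfcM, hfcimg⟩
        rw [hw] at this
        rw [Set.mem_singleton_iff] at this
        exact hac (hf.inj (this.trans hfaw.symm)).symm
      obtain ⟨z, hz, hfz⟩ := hfcimg
      have : z = c := hf.inj hfz
      exact this ▸ hz
    rw [← hfaw] at hw
    exact ⟨M, hM, ⟨hcM, hw⟩, hmax⟩
  -- all these maximal tight sets coincide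
  obtain ⟨M₀, hM₀pm⟩ := hH.2.1
  obtain ⟨f₀, hf₀, -⟩ := exists_pmFun hM₀pm
  obtain ⟨Sstar, hSstar, ⟨hcS, hexit₀⟩, hmaxS⟩ := hmaxtight f₀ hf₀
  have hexit : ∀ f : V → V, PMFun H f → NS H Sstar \ f '' Sstar = {f a} := by
    intro f hf
    obtain ⟨M, hM, ⟨hcM, hexitM⟩, hmaxM⟩ := hmaxtight f hf
    have hMeq : M = Sstar := by
      have hmeet : (Sstar ∩ M).Nonempty := ⟨c, hcS, hcM⟩
      have haX : a ∈ X := haX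
      have hU := tight_union hd hu hb hH haX hSstar hM hmeet
      have h1 := hmaxS _ hU Set.subset_union_left
      have h2 := hmaxM _ hU Set.subset_union_right
      exact h2.symm.trans h1
    rw [← hMeq]
    exact hexitM
  -- final contradiction via strict Hall on W = NS H Sstar
  set W := NS H Sstar with hW
  have hWY : W ⊆ Y := NS_subset_Y hd hb (hSstar.2.1.trans Set.diff_subset)
  have hWne : W.Nonempty := by
    have : f₀ a ∈ W \ f₀ '' Sstar := by rw [hexit f₀ hf₀]; rfl
    exact ⟨f₀ a, this.1⟩
  have hq : X.ncard = Y.ncard := sides_ncard hd hu hb hf₀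
  have hSsize : Sstar.ncard ≤ X.ncard - 2 := by
    have h1 : Sstar.ncard ≤ (X \ {a, b}).ncard := Set.ncard_le_ncard hSstar.2.1 (Set.toFinite _)
    rwa [Set.ncard_diff (by rintro w (rfl | rfl); exacts [haX, hbX]) (Set.toFinite _),
      Set.ncard_pair habne] at h1
  have hX2 : 2 ≤ X.ncard := by
    have : ({a, b} : Set V).ncard ≤ X.ncard :=
      Set.ncard_le_ncard (by rintro w (rfl | rfl); exacts [haX, hbX]) (Set.toFinite _)
    rwa [Set.ncard_pair habne] at this
  have hWcard : W.ncard = Sstar.ncard + 1 := hSstar.2.2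
  have hWneY : W ≠ Y := by
    intro h
    rw [h] at hWcard
    omega
  have hd' : Y ∩ X = ∅ := by rwa [Set.inter_comm]
  have hu' : Y ∪ X = Set.univ := by rwa [Set.union_comm]
  have hb' : ∀ u v : V, H.Adj u v → (u ∈ Y ∧ v ∈ X) ∨ (u ∈ X ∧ v ∈ Y) :=
    fun u v h => (hb u v h).symm
  have hst := strict_hall hd' hu' hb' hH hWY hWne hWneY
  have hNW : NS H W ⊆ insert a Sstar := by
    rintro x ⟨w, hwW, hadj⟩
    by_contra hx
    rw [Set.mem_insert_iff] at hx
    push_neg at hx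
    obtain ⟨hxa, hxS⟩ := hx
    obtain ⟨M, hM, hMadj⟩ := hH.2.2 hadj
    obtain ⟨f, hf, huniq⟩ := exists_pmFun hM
    have hfw : f w = x := huniq w x hMadj
    have hwnotimg : w ∉ f '' Sstar := by
      rintro ⟨z, hz, hfz⟩
      have hzw : f w = z := by rw [← hfz, hf.1]
      rw [hfw] at hzw
      exact hxS (hzw ▸ hz)
    have hmem : w ∈ NS H Sstar \ f '' Sstar := ⟨hwW, hwnotimg⟩
    rw [hexit f hf] at hmem
    rw [Set.mem_singleton_iff] at hmem
    apply hxa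
    rw [← hfw, hmem]
    exact hf.1 a
  have hNWcard : (NS H W).ncard ≤ Sstar.ncard + 1 := by
    calc (NS H W).ncard ≤ (insert a Sstar).ncard := Set.ncard_le_ncard hNW (Set.toFinite _)
      _ ≤ Sstar.ncard + 1 := Set.ncard_insert_le _ _
  omega

end Tight


/-! ### Saturation of the added side and free edges of the filled graph -/

section Sat

variable {H K : SimpleGraph V} {X Y : Set V}
variable (hd : X ∩ Y = ∅) (hu : X ∪ Y = Set.univ)
  (hb : ∀ u v : V, H.Adj u v → (u ∈ X ∧ v ∈ Y) ∨ (u ∈ Y ∧ v ∈ X))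

include hd hu hb

/-- In the equality case, if some `X`-pair is added, all `X`-pairs are added. -/
lemma A1_full [Finite V] (hH : OneExtendable H) (hle : H ≤ K) (hnum : numPM K = numPM H)
    (heq : (K.edgeSet ∩ pairsIn X).ncard + (K.edgeSet ∩ pairsIn Y).ncard = (pairsIn X).ncard)
    (hne : (K.edgeSet ∩ pairsIn X).Nonempty) : K.edgeSet ∩ pairsIn X = pairsIn X := by
  obtain ⟨e₀, he₀⟩ := hne
  have main : ∀ u w : V, u ∈ X → w ∈ X → u ≠ w → s(u, w) ∈ K.edgeSet ∩ pairsIn X := by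
    -- first get one added pair with explicit endpoints
    revert he₀
    induction e₀ with
    | _ a b =>
      intro he₀
      have hpab := he₀.2
      rw [mem_pairsIn] at hpab
      obtain ⟨habne, haX, hbX⟩ := hpab
      have step1 : ∀ c, c ∈ X → a ≠ c → s(a, c) ∈ K.edgeSet ∩ pairsIn X := by
        intro c hcX hac
        exact dagger hd hu hb hH hle hnum heq hcX he₀ hac
      intro u w huX hwX huw
      by_cases hua : u = a
      · subst hua
        exact step1 w hwX huw
      · have h1 : s(a, u) ∈ K.edgeSet ∩ pairsIn X := step1 u huX (Ne.symm hua)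
        rw [Sym2.eq_swap] at h1
        exact dagger hd hu hb hH hle hnum heq hwX h1 huw
  ext e
  constructor
  · exact fun h => h.2
  · intro he
    revert he
    induction e with
    | _ u w =>
      intro he
      rw [mem_pairsIn] at he
      exact main u w he.2.1 he.2.2 he.1

/-- The free edges of the filled graph are exactly the added pairs. -/
lemma free_fill [Finite V] (hH : OneExtendable H) :
    (freeSubgraph (fillSide H X)).edgeSet = pairsIn X := by
  ext e
  induction e with
  | _ u v =>
    rw [mem_edgeSet, mem_pairsIn]
    constructor
    · rintro ⟨hadj, hnext⟩
      rcases fillSide_adj.mp hadj with h | ⟨hne, h1, h2⟩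
      · exfalso
        obtain ⟨M, hM, hMadj⟩ := hH.2.2 h
        exact hnext ⟨liftPM le_sup_left M, liftPM_isPM le_sup_left hM, hMadj⟩
      · exact ⟨hne, h1, h2⟩
    · rintro ⟨hne, h1, h2⟩
      refine ⟨fillSide_adj.mpr (Or.inr ⟨hne, h1, h2⟩), ?_⟩
      rintro ⟨M, hM, hMadj⟩
      have := fill_pm_adj hd hu hb hH.2.1 hM u v hMadj
      rcases hb u v this with ⟨-, hY⟩ | ⟨hY, -⟩
      · exact absurd (Set.mem_inter h2 hY) (by rw [hd]; exact Set.notMem_empty v)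
      · exact absurd (Set.mem_inter h1 hY) (by rw [hd]; exact Set.notMem_empty u)

end Sat

end BipMaxAux


/-- for a bipartite 1-extendable graph `H` with sides `X₁, X₂`, the graphs
obtained by filling `X₁` resp. `X₂` are the only maximum-size elements of `ℰ(H)`, each
with exactly `C(n/2, 2)` free edges. -/
theorem bipartite_maximum_elemSupergraphs [Finite V]
    (H : SimpleGraph V) (hH : OneExtendable H)
    (X₁ X₂ : Set V) (hdisj : X₁ ∩ X₂ = ∅) (hunion : X₁ ∪ X₂ = Set.univ)
    (hbip : ∀ u v : V, H.Adj u v → (u ∈ X₁ ∧ v ∈ X₂) ∨ (u ∈ X₂ ∧ v ∈ X₁)) :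
    (fillSide H X₁ ∈ elemSupergraphs H ∧ fillSide H X₂ ∈ elemSupergraphs H) ∧
    (∀ K ∈ elemSupergraphs H, K.edgeSet.ncard ≤ (fillSide H X₁).edgeSet.ncard) ∧
    (fillSide H X₂).edgeSet.ncard = (fillSide H X₁).edgeSet.ncard ∧
    (∀ K ∈ elemSupergraphs H, K.edgeSet.ncard = (fillSide H X₁).edgeSet.ncard →
      K = fillSide H X₁ ∨ K = fillSide H X₂) ∧
    (freeSubgraph (fillSide H X₁)).edgeSet.ncard = Nat.choose (Nat.card V / 2) 2 ∧
    (freeSubgraph (fillSide H X₂)).edgeSet.ncard = Nat.choose (Nat.card V / 2) 2 := by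
  have hd := hdisj
  have hu := hunion
  have hb := hbip
  have hd₂ : X₂ ∩ X₁ = ∅ := by rwa [Set.inter_comm]
  have hu₂ : X₂ ∪ X₁ = Set.univ := by rwa [Set.union_comm]
  have hb₂ : ∀ u v : V, H.Adj u v → (u ∈ X₂ ∧ v ∈ X₁) ∨ (u ∈ X₁ ∧ v ∈ X₂) :=
    fun u v h => (hbip u v h).symm
  obtain ⟨M₀, hM₀⟩ := hH.2.1
  obtain ⟨f₀, hf₀, -⟩ := BipMaxAux.exists_pmFun hM₀
  have hq : X₁.ncard = X₂.ncard := BipMaxAux.sides_ncard hd hu hb hf₀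
  have hn : Nat.card V = X₁.ncard + X₂.ncard := BipMaxAux.card_V_eq hd hu hb
  have hhalf : Nat.card V / 2 = X₁.ncard := by omega
  have hpc1 : (BipMaxAux.pairsIn X₁ : Set (Sym2 V)).ncard = X₁.ncard.choose 2 :=
    BipMaxAux.card_pairsIn X₁
  have hpc2 : (BipMaxAux.pairsIn X₂ : Set (Sym2 V)).ncard = X₂.ncard.choose 2 :=
    BipMaxAux.card_pairsIn X₂
  refine ⟨⟨BipMaxAux.fillSide_mem hd hu hb hH.2.1, BipMaxAux.fillSide_mem hd₂ hu₂ hb₂ hH.2.1⟩,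
    ?_, ?_, ?_, ?_, ?_⟩
  · -- maximality bound
    rintro K ⟨hle, hnum⟩
    rw [BipMaxAux.edge_decomp_ncard hd hu hb hH hle hnum,
      BipMaxAux.fillSide_edgeSet_ncard hd hb]
    have hbd := BipMaxAux.card_A_le hd hu hb hle hnum hf₀
    omega
  · -- the two filled graphs have the same number of edges
    rw [BipMaxAux.fillSide_edgeSet_ncard hd hb, BipMaxAux.fillSide_edgeSet_ncard hd₂ hb₂, hq]
  · -- uniqueness at the maximum
    rintro K ⟨hle, hnum⟩ hKcard
    have hdec := BipMaxAux.edge_decomp_ncard hd hu hb hH hle hnum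
    rw [BipMaxAux.fillSide_edgeSet_ncard hd hb] at hKcard
    have heq : (K.edgeSet ∩ BipMaxAux.pairsIn X₁).ncard
        + (K.edgeSet ∩ BipMaxAux.pairsIn X₂).ncard = (BipMaxAux.pairsIn X₁).ncard := by
      omega
    by_cases hA1 : (K.edgeSet ∩ BipMaxAux.pairsIn X₁).Nonempty
    · left
      have hfull := BipMaxAux.A1_full hd hu hb hH hle hnum heq hA1
      have hfc := congrArg Set.ncard hfull
      have hA2zero : (K.edgeSet ∩ BipMaxAux.pairsIn X₂).ncard = 0 := by omega
      have hA2empty : K.edgeSet ∩ BipMaxAux.pairsIn X₂ = ∅ :=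
        (Set.ncard_eq_zero (Set.toFinite _)).mp hA2zero
      apply SimpleGraph.edgeSet_inj.mp
      have hKe := BipMaxAux.edge_decomp hd hu hb hH hle hnum
      rw [hfull, hA2empty, Set.union_empty] at hKe
      rw [hKe, BipMaxAux.fillSide_edgeSet]
    · right
      have hA1empty : K.edgeSet ∩ BipMaxAux.pairsIn X₁ = ∅ :=
        Set.not_nonempty_iff_eq_empty.mp hA1
      have hc1 : (K.edgeSet ∩ BipMaxAux.pairsIn X₁).ncard = 0 := by
        rw [hA1empty]; exact Set.ncard_empty _
      have hfull2 : K.edgeSet ∩ BipMaxAux.pairsIn X₂ = BipMaxAux.pairsIn X₂ := by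
        refine Set.eq_of_subset_of_ncard_le Set.inter_subset_right ?_ (Set.toFinite _)
        have : X₁.ncard.choose 2 = X₂.ncard.choose 2 := by rw [hq]
        omega
      apply SimpleGraph.edgeSet_inj.mp
      have hKe := BipMaxAux.edge_decomp hd₂ hu₂ hb₂ hH hle hnum
      rw [hfull2, hA1empty, Set.union_empty] at hKe
      rw [hKe, BipMaxAux.fillSide_edgeSet]
  · rw [BipMaxAux.free_fill hd hu hb hH, hpc1, hhalf]
  · rw [BipMaxAux.free_fill hd₂ hu₂ hb₂ hH, hpc2, hhalf, hq]
end

section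
/- Let H ⊂ H′ be a non-refinable ear augmentation between 1-extendable graphs H and H′, where H′ is obtained from H by augmenting one or two ears of even order. If B′ is a barrier of H′, then B = B′ ∩ V(H) is a barrier of H. -/
open SimpleGraph

variable {V : Type}

section Helpers

private lemma even_finset_card_of_involutive {α : Type*} [DecidableEq α] (f : α → α)
    (hinv : ∀ a, f (f a) = a) (hfix : ∀ a, f a ≠ a) (s : Finset α)
    (hs : ∀ a ∈ s, f a ∈ s) : Even s.card := by
  induction s using Finset.strongInduction with
  | _ s ih =>
    rcases s.eq_empty_or_nonempty with rfl | ⟨a, ha⟩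
    · simp
    · have hfa : f a ∈ s := hs a ha
      have hne : f a ≠ a := hfix a
      set t := (s.erase a).erase (f a) with ht
      have htsub : t ⊂ s := by
        refine Finset.ssubset_iff_of_subset ?_ |>.mpr ⟨a, ha, by simp [ht]⟩
        exact (Finset.erase_subset _ _).trans (Finset.erase_subset _ _)
      have hts : ∀ b ∈ t, f b ∈ t := by
        intro b hb
        simp only [ht, Finset.mem_erase] at hb ⊢
        refine ⟨?_, ?_, hs b hb.2.2⟩
        · intro h; exact hb.2.1 (by rw [← hinv b, h, hinv])
        · intro h; exact hb.1 (by rw [← h, hinv])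
      have hev := ih t htsub hts
      have hcard : s.card = t.card + 2 := by
        rw [ht, Finset.card_erase_of_mem (by simp [Finset.mem_erase, hne, hfa]),
          Finset.card_erase_of_mem ha]
        have : 2 ≤ s.card := Finset.one_lt_card.mpr ⟨a, ha, f a, hfa, hne.symm⟩
        omega
      rw [hcard]
      exact hev.add (by decide)

private lemma even_nat_card_of_involutive {α : Type*} [Finite α] (f : α → α)
    (hinv : ∀ a, f (f a) = a) (hfix : ∀ a, f a ≠ a) : Even (Nat.card α) := by
  classical
  have := Fintype.ofFinite α
  rw [Nat.card_eq_fintype_card, ← Finset.card_univ]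
  exact even_finset_card_of_involutive f hinv hfix _ (by simp)

private def sumSetEquiv {α β : Type*} (s : Set (α ⊕ β)) :
    s ≃ {u : α // Sum.inl u ∈ s} ⊕ {d : β // Sum.inr d ∈ s} where
  toFun x := match x with
    | ⟨Sum.inl u, h⟩ => Sum.inl ⟨u, h⟩
    | ⟨Sum.inr d, h⟩ => Sum.inr ⟨d, h⟩
  invFun x := match x with
    | Sum.inl ⟨u, h⟩ => ⟨Sum.inl u, h⟩
    | Sum.inr ⟨d, h⟩ => ⟨Sum.inr d, h⟩
  left_inv x := by rcases x with ⟨(u | d), h⟩ <;> rfl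
  right_inv x := by rcases x with (⟨u, h⟩ | ⟨d, h⟩) <;> rfl

private lemma exists_odd_supp_subset {U : Type*} [Finite U] (K : SimpleGraph U) (X : Set U)
    (hcl : ∀ ⦃x y⦄, x ∈ X → K.Reachable x y → y ∈ X)
    (hodd : Odd (Nat.card X)) :
    ∃ c : K.ConnectedComponent, c.supp ⊆ X ∧ Odd (Nat.card c.supp) := by
  classical
  by_contra h
  push_neg at h
  have hev : ∀ c : K.ConnectedComponent, c.supp ⊆ X → Even (Nat.card c.supp) := by
    intro c hc
    rcases Nat.even_or_odd (Nat.card c.supp) with he | ho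
    · exact he
    · exact absurd ho (h c hc)
  have hsub : ∀ x : U, x ∈ X → (K.connectedComponentMk x).supp ⊆ X := by
    intro x hx y hy
    rw [ConnectedComponent.mem_supp_iff, ConnectedComponent.eq] at hy
    exact hcl hx hy.symm
  let e : X ≃ Σ c : {c : K.ConnectedComponent // c.supp ⊆ X}, c.1.supp :=
    { toFun := fun x => ⟨⟨K.connectedComponentMk x, hsub x x.2⟩, ⟨x, rfl⟩⟩
      invFun := fun p => ⟨p.2.1, p.1.2 p.2.2⟩
      left_inv := fun x => rfl
      right_inv := fun p => by
        rcases p with ⟨⟨c, hc⟩, ⟨y, hy⟩⟩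
        have : K.connectedComponentMk y = c := hy
        subst this
        rfl }
  have hU := Fintype.ofFinite U
  have hI : Fintype {c : K.ConnectedComponent // c.supp ⊆ X} := Fintype.ofFinite _
  have hcard : Nat.card X = ∑ c : {c : K.ConnectedComponent // c.supp ⊆ X},
      Nat.card c.1.supp := by
    rw [Nat.card_congr e, Nat.card_eq_fintype_card, Fintype.card_sigma]
    congr 1
    ext c
    rw [Nat.card_eq_fintype_card]
  rw [hcard] at hodd
  have heven : Even (∑ c : {c : K.ConnectedComponent // c.supp ⊆ X}, Nat.card c.1.supp) :=
    Finset.even_sum (f := fun c : {c : K.ConnectedComponent // c.supp ⊆ X} => Nat.card c.1.supp) (fun c _ => hev c.1 c.2)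
  exact (Nat.not_even_iff_odd.mpr hodd) heven


private lemma reachable_induce_of_forall_mem {W : Type*} {G : SimpleGraph W} {A A' : Set W} :
    ∀ {x y : ↥A} (p : (G.induce A).Walk x y),
      (∀ z ∈ p.support, (z : W) ∈ A') → ∀ (x' y' : ↥A'), (x' : W) = (x : W) →
      (y' : W) = (y : W) → (G.induce A').Reachable x' y' := by
  intro x y p
  induction p with
  | nil =>
    intro _ x' y' hx hy
    have : x' = y' := Subtype.ext (hx.trans hy.symm)
    rw [this]
  | @cons a b c h q ih =>
    intro hsupp x' y' hx hy
    have hb : (b : W) ∈ A' := hsupp b (by simp [Walk.support_cons])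
    have hadj : (G.induce A').Adj x' ⟨b, hb⟩ := by
      show G.Adj (x' : W) (b : W)
      rw [hx]
      exact h
    exact hadj.reachable.trans
      (ih (fun z hz => hsupp z (by simp [Walk.support_cons, hz])) _ _ rfl hy)

private lemma exists_adj_reachable_of_walk {W : Type*} {G : SimpleGraph W} {A : Set W} {v : W}
    (hv : v ∈ A) :
    ∀ {x y : ↥A} (p : (G.induce A).Walk x y) (_ : (y : W) = v) (hxne : (x : W) ≠ v),
      ∃ (n : W) (hn : n ∈ A \ {v}), G.Adj v n ∧
        ∀ (x' : ↥(A \ {v})), (x' : W) = (x : W) →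
          (G.induce (A \ {v})).Reachable x' ⟨n, hn⟩ := by
  intro x y p
  induction p with
  | nil =>
    intro hy hxne
    exact absurd hy hxne
  | @cons a b c h q ih =>
    intro hy hxne
    by_cases hb : (b : W) = v
    · refine ⟨a, ⟨a.2, hxne⟩, ?_, ?_⟩
      · have : G.Adj (a : W) (b : W) := h
        rw [hb] at this
        exact this.symm
      · intro x' hx'
        have : x' = ⟨(a : W), ⟨a.2, hxne⟩⟩ := Subtype.ext hx'
        rw [this]
    · obtain ⟨n, hn, hadj, hreach⟩ := ih hy hb
      refine ⟨n, hn, hadj, ?_⟩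
      intro x' hx'
      have hadj2 : (G.induce (A \ {v})).Adj x' ⟨(b : W), ⟨b.2, hb⟩⟩ := by
        show G.Adj (x' : W) (b : W)
        rw [hx']
        exact h
      exact hadj2.reachable.trans (hreach _ rfl)

private lemma oddComponentCount_aux_insert {W : Type} [Finite W] (G : SimpleGraph W)
    (A : Set W) (v : W) (hvA : v ∈ A) {n₁ n₂ : W} (hnb : G.neighborSet v ⊆ {n₁, n₂}) :
    Nat.card {c : (G.induce (A \ {v})).ConnectedComponent // Odd (Nat.card c.supp)}
      ≤ Nat.card {c : (G.induce A).ConnectedComponent // Odd (Nat.card c.supp)} + 1 := by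
  classical
  set GA := G.induce A with hGA
  set GA' := G.induce (A \ {v}) with hGA'
  let ι : GA' →g GA := ⟨fun w => ⟨w.1, w.2.1⟩, fun {a b} hab => hab⟩
  let χ : GA'.ConnectedComponent → GA.ConnectedComponent := fun c => c.map ι
  let d₀ : GA.ConnectedComponent := GA.connectedComponentMk ⟨v, hvA⟩
  -- injectivity of χ away from d₀
  have h_inj : ∀ c c₂ : GA'.ConnectedComponent, χ c ≠ d₀ → χ c = χ c₂ → c = c₂ := by
    intro c c₂ hne h
    obtain ⟨u, rfl⟩ := c.exists_rep
    obtain ⟨u₂, rfl⟩ := c₂.exists_rep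
    have hreach : GA.Reachable (ι u) (ι u₂) := ConnectedComponent.exact h
    obtain ⟨p⟩ := hreach
    have hsupp : ∀ z ∈ p.support, (z : W) ∈ A \ {v} := by
      intro z hz
      refine ⟨z.2, ?_⟩
      intro hzv
      have hzz : z = (⟨v, hvA⟩ : ↥A) := Subtype.ext hzv
      have : GA.connectedComponentMk z = GA.connectedComponentMk (ι u) :=
        (ConnectedComponent.sound (p.takeUntil z hz).reachable).symm
      apply hne
      rw [hzz] at this
      exact this.symm
    exact ConnectedComponent.sound (reachable_induce_of_forall_mem p hsupp u u₂ rfl rfl)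
  -- supports are preserved away from d₀
  have h_supp : ∀ c : GA'.ConnectedComponent, χ c ≠ d₀ →
      Subtype.val '' (χ c).supp = Subtype.val '' c.supp := by
    intro c hne
    ext w
    constructor
    · rintro ⟨z, hz, rfl⟩
      have hzv : (z : W) ≠ v := by
        intro h
        apply hne
        rw [ConnectedComponent.mem_supp_iff] at hz
        rw [← hz]
        congr 1
        exact (Subtype.ext h : z = ⟨v, hvA⟩)
      have hz' : (z : W) ∈ A \ {v} := ⟨z.2, hzv⟩
      have : χ (GA'.connectedComponentMk ⟨z, hz'⟩) = χ c := by
        have : χ (GA'.connectedComponentMk ⟨(z : W), hz'⟩) = GA.connectedComponentMk z := by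
          show GA.connectedComponentMk (ι ⟨(z : W), hz'⟩) = _
          congr 1
        rw [this]
        exact hz
      have hcc := h_inj _ _ (by rw [this]; exact hne) this
      exact ⟨⟨z, hz'⟩, by rw [← hcc]; exact rfl, rfl⟩
    · rintro ⟨z, hz, rfl⟩
      refine ⟨ι z, ?_, rfl⟩
      rw [ConnectedComponent.mem_supp_iff] at hz ⊢
      rw [← hz]
      rfl
  -- the fiber over d₀ has at most 2 elements
  have h_nbr : ∀ c : GA'.ConnectedComponent, χ c = d₀ →
      ∃ n, (∃ hn : n ∈ A \ {v}, (⟨n, hn⟩ : ↥(A \ {v})) ∈ c.supp) ∧ n ∈ ({n₁, n₂} : Set W) := by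
    intro c hc
    obtain ⟨u, rfl⟩ := c.exists_rep
    have hreach : GA.Reachable (ι u) ⟨v, hvA⟩ := ConnectedComponent.exact hc
    obtain ⟨p⟩ := hreach
    obtain ⟨n, hn, hadj, hreach'⟩ := exists_adj_reachable_of_walk hvA p rfl u.2.2
    refine ⟨n, ⟨hn, ?_⟩, hnb hadj⟩
    show GA'.connectedComponentMk ⟨n, hn⟩ = GA'.connectedComponentMk u
    exact (ConnectedComponent.sound (hreach' u rfl)).symm
  set F : Set GA'.ConnectedComponent := {c | χ c = d₀} with hF
  have hFcard : F.ncard ≤ 2 := by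
    have hchoice : ∀ c : F, ∃ n, (∃ hn : n ∈ A \ {v}, (⟨n, hn⟩ : ↥(A \ {v})) ∈ c.1.supp) ∧
        n ∈ ({n₁, n₂} : Set W) := fun c => h_nbr c.1 c.2
    choose f hf1 hf2 using hchoice
    have hinj : Function.Injective f := by
      intro c c₂ h
      obtain ⟨hn, hmem⟩ := hf1 c
      obtain ⟨hn₂, hmem₂⟩ := hf1 c₂
      apply Subtype.ext
      rw [ConnectedComponent.mem_supp_iff] at hmem hmem₂
      rw [← hmem, ← hmem₂]
      congr 1
      exact Subtype.ext h
    calc F.ncard = Nat.card F := (Nat.card_coe_set_eq _).symm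
      _ ≤ Nat.card ({n₁, n₂} : Set W) := Nat.card_le_card_of_injective
          (fun c => ⟨f c, hf2 c⟩) (fun c c₂ h => hinj (congrArg Subtype.val h))
      _ = ({n₁, n₂} : Set W).ncard := Nat.card_coe_set_eq _
      _ ≤ 2 := by
        refine le_trans (Set.ncard_insert_le _ _) ?_
        simp
  have hfinW : Finite (↥(A \ {v})) := Subtype.finite
  have hfinA : Finite (↥A) := Subtype.finite
  have hfin' : Finite GA'.ConnectedComponent := Quot.finite _
  have hfin : Finite GA.ConnectedComponent := Quot.finite _
  set Odd' : Set GA'.ConnectedComponent := {c | Odd (Nat.card c.supp)} with hOdd'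
  set OddS : Set GA.ConnectedComponent := {c | Odd (Nat.card c.supp)} with hOddS
  have hgoal1 : Nat.card {c : GA'.ConnectedComponent // Odd (Nat.card c.supp)} = Odd'.ncard :=
    Nat.card_coe_set_eq _
  have hgoal2 : Nat.card {c : GA.ConnectedComponent // Odd (Nat.card c.supp)} = OddS.ncard :=
    Nat.card_coe_set_eq _
  rw [hgoal1, hgoal2]
  have hsplit : Odd'.ncard = (Odd' ∩ F).ncard + (Odd' \ F).ncard :=
    (Set.ncard_inter_add_ncard_diff_eq_ncard Odd' F (Set.toFinite _)).symm
  have hcards : ∀ c : GA'.ConnectedComponent, χ c ≠ d₀ →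
      Nat.card (χ c).supp = Nat.card c.supp := by
    intro c h
    calc Nat.card (χ c).supp = (χ c).supp.ncard := Nat.card_coe_set_eq _
      _ = (Subtype.val '' (χ c).supp).ncard :=
          (Set.ncard_image_of_injective _ Subtype.val_injective).symm
      _ = (Subtype.val '' c.supp).ncard := by rw [h_supp c h]
      _ = c.supp.ncard := Set.ncard_image_of_injective _ Subtype.val_injective
      _ = Nat.card c.supp := (Nat.card_coe_set_eq _).symm
  have hO2 : (Odd' \ F).ncard ≤ (OddS \ {d₀}).ncard := by
    have himg : χ '' (Odd' \ F) ⊆ OddS \ {d₀} := by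
      rintro _ ⟨c, ⟨hcOdd, hcF⟩, rfl⟩
      have hne : χ c ≠ d₀ := hcF
      exact ⟨by rw [hOddS, Set.mem_setOf_eq, hcards c hne]; exact hcOdd, hne⟩
    calc (Odd' \ F).ncard = (χ '' (Odd' \ F)).ncard := by
          rw [Set.ncard_image_of_injOn]
          intro c hc c₂ hc₂ h
          exact h_inj c c₂ hc.2 h
      _ ≤ (OddS \ {d₀}).ncard := Set.ncard_le_ncard himg (Set.toFinite _)
  rcases Nat.even_or_odd (Nat.card d₀.supp) with hd₀e | hd₀o
  · -- d₀ even : at most one odd component in the fiber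
    have hO1 : (Odd' ∩ F).ncard ≤ 1 := by
      by_contra hlt
      push_neg at hlt
      obtain ⟨c₁, hc₁, c₂, hc₂, hne12⟩ := (Set.one_lt_ncard (Set.toFinite _)).mp hlt
      have hpairF : ({c₁, c₂} : Set GA'.ConnectedComponent) = F :=
        Set.eq_of_subset_of_ncard_le
          (by rintro z (rfl | rfl); exacts [hc₁.2, hc₂.2])
          (by rw [Set.ncard_pair hne12]; exact hFcard) (Set.toFinite _)
      set X : Set (↥(A \ {v})) := {w | χ (GA'.connectedComponentMk w) = d₀} with hX
      have hXuni : X = c₁.supp ∪ c₂.supp := by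
        ext w
        have : (GA'.connectedComponentMk w ∈ F) ↔
            (GA'.connectedComponentMk w ∈ ({c₁, c₂} : Set GA'.ConnectedComponent)) := by
          rw [hpairF]
        simpa [hX, hF, Set.mem_union, ConnectedComponent.mem_supp_iff] using this
      have hdisj : Disjoint c₁.supp c₂.supp := by
        rw [Set.disjoint_left]
        intro w hw1 hw2
        rw [ConnectedComponent.mem_supp_iff] at hw1 hw2
        exact hne12 (hw1.symm.trans hw2)
      have hXcard1 : X.ncard = Nat.card c₁.supp + Nat.card c₂.supp := by
        rw [hXuni, Set.ncard_union_eq hdisj (Set.toFinite _) (Set.toFinite _),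
          Nat.card_coe_set_eq, Nat.card_coe_set_eq]
      have hXval : Subtype.val '' X = (Subtype.val '' d₀.supp) \ {v} := by
        ext z
        constructor
        · rintro ⟨w, hw, rfl⟩
          exact ⟨⟨ι w, hw, rfl⟩, w.2.2⟩
        · rintro ⟨⟨z', hz', rfl⟩, hzv⟩
          refine ⟨⟨z'.1, ⟨z'.2, hzv⟩⟩, ?_, rfl⟩
          have : ι ⟨z'.1, ⟨z'.2, hzv⟩⟩ = z' := Subtype.ext rfl
          show GA.connectedComponentMk (ι ⟨z'.1, ⟨z'.2, hzv⟩⟩) = d₀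
          rw [this]
          exact hz'
      have hvd₀ : (⟨v, hvA⟩ : ↥A) ∈ d₀.supp := rfl
      have hXcard2 : X.ncard = Nat.card d₀.supp - 1 := by
        calc X.ncard = (Subtype.val '' X).ncard :=
              (Set.ncard_image_of_injective _ Subtype.val_injective).symm
          _ = ((Subtype.val '' d₀.supp) \ {v}).ncard := by rw [hXval]
          _ = (Subtype.val '' d₀.supp).ncard - 1 := by
              rw [Set.ncard_diff_singleton_of_mem (Set.mem_image_of_mem Subtype.val hvd₀)]
          _ = Nat.card d₀.supp - 1 := by
              rw [Set.ncard_image_of_injective _ Subtype.val_injective,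
                Nat.card_coe_set_eq]
      have hd₀pos : 1 ≤ Nat.card d₀.supp := by
        rw [Nat.card_coe_set_eq]
        exact (Set.ncard_pos (Set.toFinite _)).mpr ⟨_, hvd₀⟩
      have ho1 := hc₁.1
      have ho2 := hc₂.1
      rw [hOdd', Set.mem_setOf_eq, Nat.odd_iff] at ho1 ho2
      rw [Nat.even_iff] at hd₀e
      omega
    have hmono : (OddS \ {d₀}).ncard ≤ OddS.ncard :=
      Set.ncard_le_ncard Set.diff_subset (Set.toFinite _)
    omega
  · -- d₀ odd
    have hO1 : (Odd' ∩ F).ncard ≤ 2 :=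
      le_trans (Set.ncard_le_ncard Set.inter_subset_right (Set.toFinite _)) hFcard
    have hd₀mem : d₀ ∈ OddS := hd₀o
    have hdiff : (OddS \ {d₀}).ncard = OddS.ncard - 1 :=
      Set.ncard_diff_singleton_of_mem hd₀mem
    have hpos : 1 ≤ OddS.ncard := (Set.ncard_pos (Set.toFinite _)).mpr ⟨_, hd₀mem⟩
    omega

private lemma oddComponentCount_insert_le {W : Type} [Finite W] (G : SimpleGraph W)
    (S : Set W) (v : W) (hv : v ∉ S) {n₁ n₂ : W} (hnb : G.neighborSet v ⊆ {n₁, n₂}) :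
    oddComponentCount G (insert v S) ≤ oddComponentCount G S + 1 := by
  have hins : ((insert v S)ᶜ : Set W) = (Sᶜ : Set W) \ {v} := by
    ext w; simp [Set.mem_diff, and_comm]
  unfold oddComponentCount
  rw [hins]
  exact oddComponentCount_aux_insert G (Sᶜ : Set W) v hv hnb

private def delIso {W : Type} (G : SimpleGraph W) (S : Set W) :
    ((⊤ : G.Subgraph).deleteVerts S).coe ≃g G.induce (Sᶜ : Set W) where
  toEquiv := Equiv.setCongr (by ext w; simp)
  map_rel_iff' := by
    intro a b
    simp only [Equiv.setCongr, Equiv.coe_fn_mk, comap_adj, Function.Embedding.coe_subtype,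
      Subgraph.coe_adj, Subgraph.deleteVerts_adj, Subgraph.top_adj, Equiv.subtypeEquiv_apply]
    constructor
    · intro h
      exact ⟨trivial, a.2.2, trivial, b.2.2, h⟩
    · intro h
      exact h.2.2.2.2

private lemma oddComponentCount_le_ncard_of_pm {W : Type} [Finite W] {G : SimpleGraph W}
    {M : G.Subgraph} (hM : M.IsPerfectMatching) (S : Set W) :
    oddComponentCount G S ≤ S.ncard := by
  classical
  rw [← Nat.card_coe_set_eq]
  have key : ∀ c : {c : (G.induce (Sᶜ : Set W)).ConnectedComponent // Odd (Nat.card c.supp)},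
      ∃ (w : W) (x : ((⊤ : G.Subgraph).deleteVerts S).verts), w ∈ S ∧ M.Adj x w ∧
        x ∈ (((delIso G S).connectedComponentEquiv).symm c.1).supp := by
    intro c
    have hodd : Odd (Nat.card (((delIso G S).connectedComponentEquiv).symm c.1).supp) := by
      have h2 := Nat.card_congr (ConnectedComponent.isoEquivSupp (delIso G S)
        (((delIso G S).connectedComponentEquiv).symm c.1))
      rw [Equiv.apply_symm_apply] at h2
      rw [h2]; exact c.2
    obtain ⟨w, hw, x, hx1, hx2⟩ := ConnectedComponent.odd_matches_node_outside hM
      ⟨_, (show Odd (Set.ncard _) by rw [← Nat.card_coe_set_eq]; exact hodd)⟩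
    exact ⟨w, x, hw, hx1, hx2⟩
  choose f g hmem hadj hsupp using key
  have hinj : Function.Injective (fun c => (⟨f c, hmem c⟩ : S)) := by
    intro c₁ c₂ h
    have hfeq : f c₁ = f c₂ := congrArg Subtype.val h
    have hwverts : (f c₁ : W) ∈ M.verts := hM.2 _
    have huniq := hM.1 hwverts
    have h1 : M.Adj (f c₁) (g c₁) := (hadj c₁).symm
    have h2 : M.Adj (f c₁) (g c₂) := by rw [hfeq]; exact (hadj c₂).symm
    have hgeq : (g c₁ : W) = (g c₂ : W) := by
      obtain ⟨u, _, hu⟩ := huniq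
      rw [hu _ h1, hu _ h2]
    have hg : g c₁ = g c₂ := Subtype.ext hgeq
    have hc : (((delIso G S).connectedComponentEquiv).symm c₁.1) =
        (((delIso G S).connectedComponentEquiv).symm c₂.1) := by
      have hs1 := hsupp c₁
      have hs2 := hsupp c₂
      rw [hg] at hs1
      rw [ConnectedComponent.mem_supp_iff] at hs1 hs2
      rw [← hs1, ← hs2]
    exact Subtype.ext (((delIso G S).connectedComponentEquiv).symm.injective hc)
  exact Nat.card_le_card_of_injective _ hinj

end Helpers

section Ear
variable {H : SimpleGraph V} {m : ℕ} {x y : Fin m → V} {ℓ : Fin m → ℕ}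

private lemma earsAugment_adj_inl {u v : V} (h : H.Adj u v) :
    (earsAugment H m x y ℓ).Adj (Sum.inl u) (Sum.inl v) := by
  rw [earsAugment, fromRel_adj]
  exact ⟨by simp [h.ne], Or.inl (Or.inl h)⟩

private lemma earsAugment_adj_inr {j : Fin m} {i i' : Fin (ℓ j)}
    (h : (i : ℕ) + 1 = (i' : ℕ)) :
    (earsAugment H m x y ℓ).Adj (Sum.inr ⟨j, i⟩) (Sum.inr ⟨j, i'⟩) := by
  rw [earsAugment, fromRel_adj]
  refine ⟨?_, Or.inl ⟨rfl, h⟩⟩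
  intro hc
  have h2 := Sum.inr_injective hc
  have h3 : i = i' := eq_of_heq (Sigma.mk.inj_iff.mp h2).2
  have := congrArg Fin.val h3
  omega

private lemma earVertex_pos {j : Fin m} {a : ℕ} (h1 : 0 < a) (h2 : a ≤ ℓ j) :
    earVertex x y ℓ j a = Sum.inr ⟨j, ⟨a - 1, by omega⟩⟩ := by
  rw [earVertex, dif_pos ⟨h1, h2⟩]

private lemma earVertex_zero {j : Fin m} : earVertex x y ℓ j 0 = Sum.inl (x j) := by
  rw [earVertex, dif_neg (by omega), if_pos rfl]

private lemma earVertex_last {j : Fin m} {a : ℕ} (h : ℓ j < a) :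
    earVertex x y ℓ j a = Sum.inl (y j) := by
  rw [earVertex, dif_neg (by omega), if_neg (by omega)]

private lemma earsAugment_nbr {j : Fin m} {i : Fin (ℓ j)} {b : V ⊕ (Σ j : Fin m, Fin (ℓ j))}
    (h : (earsAugment H m x y ℓ).Adj (Sum.inr ⟨j, i⟩) b) :
    b = earVertex x y ℓ j (i : ℕ) ∨ b = earVertex x y ℓ j ((i : ℕ) + 2) := by
  rw [earsAugment, fromRel_adj] at h
  rcases b with u | ⟨j', i'⟩
  · obtain ⟨hne, ⟨hu, hi⟩ | ⟨hu, hi⟩⟩ := h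
    · right
      rw [hu, earVertex_last (by omega)]
    · left
      rw [hu, hi, earVertex_zero]
  · obtain ⟨hne, ⟨hj, hi⟩ | ⟨hj, hi⟩⟩ := h
    · subst hj
      right
      rw [earVertex_pos (by omega) (by have := i'.isLt; omega : (i : ℕ) + 2 ≤ ℓ j)]
      have : (⟨(i : ℕ) + 2 - 1, by have := i'.isLt; omega⟩ : Fin (ℓ j)) = i' := by
        apply Fin.ext
        simp only [Fin.val_mk]
        omega
      rw [this]
    · subst hj
      left
      rw [earVertex_pos (by omega) (i.isLt.le : (i : ℕ) ≤ ℓ j')]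
      have : (⟨(i : ℕ) - 1, by have := i.isLt; omega⟩ : Fin (ℓ j')) = i' := by
        apply Fin.ext
        simp only [Fin.val_mk]
        omega
      rw [this]

end Ear


private def pairFin {n : ℕ} (hn : Even n) (i : Fin n) : Fin n :=
  if h : (i : ℕ) % 2 = 0 then
    ⟨(i : ℕ) + 1, by rw [Nat.even_iff] at hn; have := i.isLt; omega⟩
  else ⟨(i : ℕ) - 1, by have := i.isLt; omega⟩

private lemma pairFin_val {n : ℕ} (hn : Even n) (i : Fin n) :
    ((pairFin hn i : ℕ) = (i : ℕ) + 1 ∧ (i : ℕ) % 2 = 0) ∨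
      ((pairFin hn i : ℕ) = (i : ℕ) - 1 ∧ (i : ℕ) % 2 = 1 ∧ 1 ≤ (i : ℕ)) := by
  rw [pairFin]
  by_cases h : (i : ℕ) % 2 = 0
  · rw [dif_pos h]; exact Or.inl ⟨rfl, h⟩
  · rw [dif_neg h]; exact Or.inr ⟨rfl, by omega, by omega⟩

private lemma pairFin_invol {n : ℕ} (hn : Even n) (i : Fin n) :
    pairFin hn (pairFin hn i) = i := by
  apply Fin.ext
  rcases pairFin_val hn (pairFin hn i) with ⟨h1, h2⟩ | ⟨h1, h2, h3⟩ <;>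
    rcases pairFin_val hn i with ⟨g1, g2⟩ | ⟨g1, g2, g3⟩ <;> omega

private lemma pairFin_ne {n : ℕ} (hn : Even n) (i : Fin n) : pairFin hn i ≠ i := by
  intro h
  have := congrArg Fin.val h
  rcases pairFin_val hn i with ⟨h1, h2⟩ | ⟨h1, h2, h3⟩ <;> omega

section EarB
variable {H : SimpleGraph V} {m : ℕ} {x y : Fin m → V} {ℓ : Fin m → ℕ}

private lemma earsAugment_adj_pairFin (hEven : ∀ j, Even (ℓ j)) (j : Fin m) (i : Fin (ℓ j)) :
    (earsAugment H m x y ℓ).Adj (Sum.inr ⟨j, i⟩) (Sum.inr ⟨j, pairFin (hEven j) i⟩) := by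
  rcases pairFin_val (hEven j) i with ⟨h1, h2⟩ | ⟨h1, h2, h3⟩
  · exact earsAugment_adj_inr (by omega)
  · exact (earsAugment_adj_inr (by omega : (pairFin (hEven j) i : ℕ) + 1 = (i : ℕ))).symm

private lemma oddComponentCount_earsAugment_le [Finite V]
    (hEven : ∀ j, Even (ℓ j)) (B : Set V) :
    oddComponentCount (earsAugment H m x y ℓ) (Sum.inl '' B) ≤ oddComponentCount H B := by
  classical
  set H' := earsAugment H m x y ℓ with hH'def
  set A' : Set (V ⊕ (Σ j : Fin m, Fin (ℓ j))) := (Sum.inl '' B)ᶜ with hA'def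
  set A : Set V := Bᶜ with hAdef
  have hinl_iff : ∀ u : V, Sum.inl u ∈ A' ↔ u ∈ A := by
    intro u
    simp [hA'def, hAdef]
  let ι : (H.induce A) →g (H'.induce A') :=
    ⟨fun w => ⟨Sum.inl w.1, (hinl_iff _).mpr w.2⟩, fun {a b} hab => earsAugment_adj_inl hab⟩
  let χ : (H.induce A).ConnectedComponent → (H'.induce A').ConnectedComponent :=
    fun c => c.map ι
  have key : ∀ c' : {c : (H'.induce A').ConnectedComponent // Odd (Nat.card c.supp)},
      ∃ c : (H.induce A).ConnectedComponent, Odd (Nat.card c.supp) ∧ χ c = c'.1 := by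
    intro c'
    set Sval : Set (V ⊕ (Σ j : Fin m, Fin (ℓ j))) := Subtype.val '' (c'.1).supp with hSvaldef
    have hSval_mem : ∀ z, z ∈ Sval ↔ ∃ hz : z ∈ A',
        (H'.induce A').connectedComponentMk ⟨z, hz⟩ = c'.1 := by
      intro z
      constructor
      · rintro ⟨w, hw, rfl⟩
        exact ⟨w.2, by rwa [ConnectedComponent.mem_supp_iff] at hw⟩
      · rintro ⟨hz, h⟩
        exact ⟨⟨z, hz⟩, h, rfl⟩
    have hSvalA' : ∀ z ∈ Sval, z ∈ A' := by
      rintro z ⟨w, hw, rfl⟩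
      exact w.2
    -- the internal part of the component is even
    have hEvenE : Even (Nat.card {d : Σ j : Fin m, Fin (ℓ j) // Sum.inr d ∈ Sval}) := by
      have hmempair : ∀ d : Σ j : Fin m, Fin (ℓ j), Sum.inr d ∈ Sval →
          Sum.inr (⟨d.1, pairFin (hEven d.1) d.2⟩ : Σ j : Fin m, Fin (ℓ j)) ∈ Sval := by
        rintro ⟨j, i⟩ hd
        obtain ⟨hz, hmk⟩ := (hSval_mem _).mp hd
        have hadj : (H'.induce A').Adj ⟨Sum.inr ⟨j, i⟩, hz⟩
            ⟨Sum.inr ⟨j, pairFin (hEven j) i⟩, by simp [hA'def]⟩ :=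
          earsAugment_adj_pairFin (H := H) (x := x) (y := y) hEven j i
        refine (hSval_mem _).mpr ⟨by simp [hA'def], ?_⟩
        rw [← hmk]
        exact (ConnectedComponent.connectedComponentMk_eq_of_adj hadj).symm
      refine even_nat_card_of_involutive
        (fun e => ⟨⟨e.1.1, pairFin (hEven e.1.1) e.1.2⟩, hmempair e.1 e.2⟩) ?_ ?_
      · rintro ⟨⟨j, i⟩, he⟩
        apply Subtype.ext
        show (⟨j, pairFin (hEven j) (pairFin (hEven j) i)⟩ : Σ j : Fin m, Fin (ℓ j)) = ⟨j, i⟩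
        rw [pairFin_invol]
      · rintro ⟨⟨j, i⟩, he⟩
        intro hc
        have := congrArg Subtype.val hc
        have h2 : (⟨j, pairFin (hEven j) i⟩ : Σ j : Fin m, Fin (ℓ j)) = ⟨j, i⟩ := this
        exact pairFin_ne (hEven j) i (eq_of_heq (Sigma.mk.inj_iff.mp h2).2)
    -- X : the V-part of the component, inside H - B
    set X : Set ↥A := {w : ↥A | Sum.inl (w : V) ∈ Sval} with hXdef
    have hXcard : Nat.card X = Nat.card {u : V // Sum.inl u ∈ Sval} := by
      refine Nat.card_congr ⟨fun w => ⟨w.1.1, w.2⟩,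
        fun u => ⟨⟨u.1, (hinl_iff _).mp (hSvalA' _ u.2)⟩, u.2⟩, ?_, ?_⟩
      · intro w; apply Subtype.ext; apply Subtype.ext; rfl
      · intro u; apply Subtype.ext; rfl
    have hctot : Nat.card (c'.1).supp = Nat.card {u : V // Sum.inl u ∈ Sval} +
        Nat.card {d : Σ j : Fin m, Fin (ℓ j) // Sum.inr d ∈ Sval} := by
      rw [← Nat.card_sum]
      refine Nat.card_congr ?_
      exact (Equiv.Set.image Subtype.val (c'.1).supp Subtype.val_injective).trans
        (sumSetEquiv Sval)
    have hXodd : Odd (Nat.card X) := by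
      have hc := c'.2
      rw [hctot] at hc
      rw [Nat.odd_iff] at hc ⊢
      rw [Nat.even_iff] at hEvenE
      rw [hXcard]
      omega
    have hcl : ∀ ⦃x' y' : ↥A⦄, x' ∈ X → (H.induce A).Reachable x' y' → y' ∈ X := by
      intro x' y' hx hr
      have hr' : (H'.induce A').Reachable (ι x') (ι y') := hr.map ι
      obtain ⟨hz, hmk⟩ := (hSval_mem _).mp hx
      have hx'eq : (⟨Sum.inl (x' : V), hz⟩ : ↥A') = ι x' := Subtype.ext rfl
      refine (hSval_mem _).mpr ⟨(ι y').2, ?_⟩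
      have : (H'.induce A').connectedComponentMk (ι y') =
          (H'.induce A').connectedComponentMk (ι x') := (ConnectedComponent.sound hr').symm
      rw [show (⟨Sum.inl (y' : V), (ι y').2⟩ : ↥A') = ι y' from Subtype.ext rfl, this,
        ← hx'eq, hmk]
    obtain ⟨c, hsub, hodd⟩ := exists_odd_supp_subset (H.induce A) X hcl hXodd
    refine ⟨c, hodd, ?_⟩
    have hne : (Nat.card c.supp) ≠ 0 := by
      intro h
      rw [h] at hodd
      simp [Nat.odd_iff] at hodd
    have : Nonempty c.supp := (Nat.card_ne_zero.mp hne).1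
    obtain ⟨⟨u, hu⟩⟩ := this
    have hX : u ∈ X := hsub hu
    obtain ⟨hz, hmk⟩ := (hSval_mem _).mp hX
    have : χ c = χ ((H.induce A).connectedComponentMk u) := by
      rw [ConnectedComponent.mem_supp_iff] at hu
      rw [hu]
    rw [this]
    show (H'.induce A').connectedComponentMk (ι u) = c'.1
    rw [show ι u = ⟨Sum.inl (u : V), hz⟩ from Subtype.ext rfl]
    exact hmk
  choose Ψ hΨodd hΨχ using key
  unfold oddComponentCount
  refine Nat.card_le_card_of_injective (fun c' => ⟨Ψ c', hΨodd c'⟩) ?_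
  intro c₁ c₂ h
  have : Ψ c₁ = Ψ c₂ := congrArg Subtype.val h
  apply Subtype.ext
  rw [← hΨχ c₁, ← hΨχ c₂, this]

end EarB

/-- in a non-refinable augmentation by one or two even-order ears between
1-extendable graphs, the trace on `V(H)` of any barrier of the augmented graph is a
barrier of `H`. -/
theorem barrier_trace_of_ear_augmentation [Finite V]
    (H : SimpleGraph V) (m : ℕ) (hm : m = 1 ∨ m = 2)
    (x y : Fin m → V) (ℓ : Fin m → ℕ) (hsys : IsEarSystem H m x y ℓ)
    (hH : OneExtendable H) (hH' : OneExtendable (earsAugment H m x y ℓ))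
    (hnonref : NonRefinableSystem H m x y ℓ)
    (B' : Set (V ⊕ (Σ j : Fin m, Fin (ℓ j))))
    (hB' : IsBarrier (earsAugment H m x y ℓ) B') :
    IsBarrier H {v : V | Sum.inl v ∈ B'} := by
  classical
  obtain ⟨-, ⟨M, hM⟩, -⟩ := hH
  set H' := earsAugment H m x y ℓ with hH'def
  set B : Set V := {v : V | Sum.inl v ∈ B'} with hBdef
  set C : Set (Σ j : Fin m, Fin (ℓ j)) := {d | Sum.inr d ∈ B'} with hCdef
  have hB'eq : B' = Sum.inl '' B ∪ Sum.inr '' C := by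
    ext z
    rcases z with u | d
    · simp [hBdef, Set.mem_image]
    · simp [hCdef, Set.mem_image]
  have hBcard : B'.ncard = B.ncard + C.ncard := by
    rw [← Nat.card_coe_set_eq, Nat.card_congr (sumSetEquiv B'), Nat.card_sum]
    exact congrArg₂ HAdd.hAdd (Nat.card_coe_set_eq B) (Nat.card_coe_set_eq C)
  have hstep : ∀ T : Set (Σ j : Fin m, Fin (ℓ j)),
      oddComponentCount H' (Sum.inl '' B ∪ Sum.inr '' T) ≤
        oddComponentCount H' (Sum.inl '' B) + T.ncard := by
    intro T
    refine Set.Finite.induction_on (motive := fun T _ =>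
        oddComponentCount H' (Sum.inl '' B ∪ Sum.inr '' T) ≤
          oddComponentCount H' (Sum.inl '' B) + T.ncard) T (Set.toFinite T) (by simp) ?_
    intro d T hdT hTfin ih
    · have hsets : Sum.inl '' B ∪ Sum.inr '' (insert d T) =
          insert (Sum.inr d) (Sum.inl '' B ∪ Sum.inr '' T) := by
        rw [Set.image_insert_eq, Set.union_insert]
      rw [hsets]
      have hnotmem : (Sum.inr d : V ⊕ (Σ j : Fin m, Fin (ℓ j))) ∉
          Sum.inl '' B ∪ Sum.inr '' T := by
        rintro (⟨u, _, hc⟩ | ⟨e, he, hc⟩)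
        · exact Sum.inl_ne_inr hc
        · exact hdT ((Sum.inr_injective hc) ▸ he)
      obtain ⟨j, i⟩ := d
      have hnb : H'.neighborSet (Sum.inr ⟨j, i⟩) ⊆
          {earVertex x y ℓ j (i : ℕ), earVertex x y ℓ j ((i : ℕ) + 2)} :=
        fun b hb => earsAugment_nbr hb
      have hins := oddComponentCount_insert_le H' (Sum.inl '' B ∪ Sum.inr '' T)
        (Sum.inr ⟨j, i⟩) hnotmem hnb
      have hcard : (insert (⟨j, i⟩ : Σ j : Fin m, Fin (ℓ j)) T).ncard = T.ncard + 1 :=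
        Set.ncard_insert_of_notMem hdT (Set.toFinite _)
      omega
  have h1 : oddComponentCount H' B' ≤ oddComponentCount H' (Sum.inl '' B) + C.ncard := by
    rw [hB'eq]
    exact hstep C
  have h2 : oddComponentCount H' (Sum.inl '' B) ≤ oddComponentCount H B :=
    oddComponentCount_earsAugment_le hsys.2.1 B
  have h3 : oddComponentCount H B ≤ B.ncard :=
    oddComponentCount_le_ncard_of_pm hM B
  have hB'c : oddComponentCount H' B' = B'.ncard := hB'
  show oddComponentCount H B = B.ncard
  omega
end
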